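/- arXiv:1306.3735 — 8 statements merged into one kernel-verified Lean document; each statement's English description precedes it below -/
import Mathlib

section
/- Let ν > 0, T > 0, and let F, G : [0,T] × ℝ³ → [0,∞) be measurable. Define H(t,ξ) = ∫₀ᵗ e^{−ν(t−s)|ξ|²} |ξ| (F(s,·) ∗ G(s,·))(ξ) ds, where ∗ denotes convolution in the ξ variable on ℝ³. Then ( ∫₀ᵀ ( ∫_{ℝ³} H(t,ξ) dξ )² dt )^{1/2} ≤ (2ν)^{−1/2} ( ∫₀ᵀ ( ∫_{ℝ³} F(s,ξ) dξ )² ds )^{1/2} ( ∫₀ᵀ ( ∫_{ℝ³} G(s,ξ) dξ )² ds )^{1/2}. -/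
open MeasureTheory Real Set
open scoped ENNReal

noncomputable abbrev E3 := EuclideanSpace ℝ (Fin 3)

/-- the heat-type kernel -/
noncomputable def kk (ν t s : ℝ) (ξ : E3) : ℝ≥0∞ :=
  ENNReal.ofReal (Real.exp (-ν * (t - s) * ‖ξ‖ ^ 2) * ‖ξ‖)

/-- indicator of `{(t,s) | 0 ≤ s ≤ t}` -/
noncomputable def cc (t s : ℝ) : ℝ≥0∞ := if 0 ≤ s ∧ s ≤ t then 1 else 0

lemma kk_meas (ν : ℝ) : Measurable (fun z : ℝ × ℝ × E3 => kk ν z.1 z.2.1 z.2.2) := by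
  unfold kk; fun_prop

lemma cc_meas : Measurable (fun z : ℝ × ℝ × E3 => cc z.1 z.2.1) := by
  unfold cc
  refine Measurable.ite ?_ measurable_const measurable_const
  exact (measurableSet_le measurable_const (measurable_fst.comp measurable_snd)).inter
    (measurableSet_le (measurable_fst.comp measurable_snd) measurable_fst)

lemma kk_meas1 (ν s : ℝ) (ξ : E3) : Measurable fun t : ℝ => kk ν t s ξ := by
  unfold kk; fun_prop

lemma cc_meas1 (s : ℝ) (ξ : E3) : Measurable fun t : ℝ => cc t s :=
  cc_meas.comp (measurable_id.prodMk (measurable_const (a := (s, ξ))))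

lemma ck_meas1 (ν s : ℝ) (ξ : E3) : Measurable fun t : ℝ => cc t s * kk ν t s ξ :=
  (cc_meas1 s ξ).mul (kk_meas1 ν s ξ)

lemma exp_ray (b s : ℝ) (hb : 0 < b) :
    ∫⁻ t in Ioi s, ENNReal.ofReal (Real.exp (-(b*(t-s)))) = ENNReal.ofReal (1/b) := by
  have hmp : MeasurePreserving (· + s) (volume : Measure ℝ) volume :=
    measurePreserving_add_right volume s
  have hpre : ((· + s) : ℝ → ℝ) ⁻¹' (Ioi s) = Ioi 0 := by ext x; simp
  have hmeas : Measurable fun t : ℝ => ENNReal.ofReal (Real.exp (-(b*(t-s)))) := by fun_prop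
  rw [← hmp.setLIntegral_comp_preimage measurableSet_Ioi hmeas, hpre]
  simp only [add_sub_cancel_right]
  rw [← ofReal_integral_eq_lintegral_ofReal]
  · rw [integral_comp_mul_left_Ioi (fun u => Real.exp (-u)) 0 hb]
    norm_num [integral_exp_neg_Ioi_zero, integral_exp_Iic_zero]
  · simpa [neg_mul, IntegrableOn] using exp_neg_integrableOn_Ioi 0 hb
  · filter_upwards with x using (Real.exp_pos _).le

lemma ksq {ν : ℝ} (hν : 0 < ν) (s : ℝ) (ξ : E3) :
    ∫⁻ t in Ici s, (kk ν t s ξ) ^ 2 ≤ ENNReal.ofReal (1 / (2*ν)) := by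
  by_cases h0 : ‖ξ‖ = 0
  · simp [kk, h0]
  have ha : 0 < ‖ξ‖ := lt_of_le_of_ne (norm_nonneg _) (Ne.symm h0)
  set a := ‖ξ‖ with ha_def
  set b := 2 * ν * a ^ 2 with hb_def
  have hb : 0 < b := by positivity
  have hpt : ∀ t, (kk ν t s ξ) ^ 2
      = ENNReal.ofReal (a ^ 2) * ENNReal.ofReal (Real.exp (-(b*(t-s)))) := by
    intro t
    rw [kk, ← ENNReal.ofReal_pow (by positivity), ← ENNReal.ofReal_mul (by positivity)]
    congr 1
    have : Real.exp (-ν * (t - s) * a ^ 2) ^ 2 = Real.exp (-(b*(t-s))) := by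
      rw [sq, ← Real.exp_add]; congr 1; rw [hb_def]; ring
    rw [mul_pow, this]; ring
  calc ∫⁻ t in Ici s, (kk ν t s ξ) ^ 2
      = ∫⁻ t in Ici s, ENNReal.ofReal (a ^ 2) * ENNReal.ofReal (Real.exp (-(b*(t-s)))) :=
        lintegral_congr hpt
    _ = ENNReal.ofReal (a ^ 2) * ∫⁻ t in Ici s, ENNReal.ofReal (Real.exp (-(b*(t-s)))) :=
        lintegral_const_mul _ (by fun_prop)
    _ = ENNReal.ofReal (a ^ 2) * ∫⁻ t in Ioi s, ENNReal.ofReal (Real.exp (-(b*(t-s)))) := by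
        rw [setLIntegral_congr (Ioi_ae_eq_Ici (a := s))]
    _ = ENNReal.ofReal (a ^ 2) * ENNReal.ofReal (1/b) := by rw [exp_ray b s hb]
    _ ≤ ENNReal.ofReal (1 / (2*ν)) := le_of_eq (by
        rw [← ENNReal.ofReal_mul (by positivity)]
        congr 1
        rw [hb_def]; field_simp)

lemma cs_core {ν : ℝ} (hν : 0 < ν) (T : ℝ) (s s' : ℝ) (ξ ξ' : E3) :
    ∫⁻ t in Icc 0 T, (cc t s * kk ν t s ξ) * (cc t s' * kk ν t s' ξ')
      ≤ ENNReal.ofReal (1/(2*ν)) := by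
  have hm : ∀ (s : ℝ) (ξ : E3), Measurable fun t => cc t s * kk ν t s ξ :=
    fun s ξ => ck_meas1 ν s ξ
  have key : ∀ (s : ℝ) (ξ : E3),
      ∫⁻ t in Icc 0 T, (cc t s * kk ν t s ξ) ^ (2:ℝ) ≤ ENNReal.ofReal (1/(2*ν)) := by
    intro s ξ
    have hpt : ∀ t, (cc t s * kk ν t s ξ) ^ (2:ℝ)
        ≤ (Ici s).indicator (fun t => (kk ν t s ξ) ^ 2) t := by
      intro t
      rw [show (2:ℝ) = ((2:ℕ):ℝ) by norm_num, ENNReal.rpow_natCast]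
      by_cases hst : 0 ≤ s ∧ s ≤ t
      · rw [Set.indicator_of_mem (mem_Ici.mpr hst.2), cc, if_pos hst, one_mul]
      · rw [cc, if_neg hst, zero_mul]
        simp
    calc ∫⁻ t in Icc 0 T, (cc t s * kk ν t s ξ) ^ (2:ℝ)
        ≤ ∫⁻ t in Icc 0 T, (Ici s).indicator (fun t => (kk ν t s ξ) ^ 2) t :=
          lintegral_mono hpt
      _ ≤ ∫⁻ t, (Ici s).indicator (fun t => (kk ν t s ξ) ^ 2) t :=
          setLIntegral_le_lintegral _ _
      _ = ∫⁻ t in Ici s, (kk ν t s ξ) ^ 2 := lintegral_indicator measurableSet_Ici _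
      _ ≤ ENNReal.ofReal (1/(2*ν)) := ksq hν s ξ
  have hpq : (2:ℝ).HolderConjugate 2 := .two_two
  have hCS := ENNReal.lintegral_mul_le_Lp_mul_Lq (volume.restrict (Icc 0 T)) hpq
    (hm s ξ).aemeasurable (hm s' ξ').aemeasurable
  simp only [Pi.mul_apply] at hCS
  have h0 : ENNReal.ofReal (1/(2*ν)) ≠ 0 := by
    simp [ENNReal.ofReal_eq_zero]; positivity
  refine hCS.trans ?_
  calc (∫⁻ t in Icc 0 T, (cc t s * kk ν t s ξ) ^ (2:ℝ)) ^ (1/2:ℝ)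
        * (∫⁻ t in Icc 0 T, (cc t s' * kk ν t s' ξ') ^ (2:ℝ)) ^ (1/2:ℝ)
      ≤ (ENNReal.ofReal (1/(2*ν))) ^ (1/2:ℝ) * (ENNReal.ofReal (1/(2*ν))) ^ (1/2:ℝ) :=
        mul_le_mul' (ENNReal.rpow_le_rpow (key s ξ) (by norm_num))
          (ENNReal.rpow_le_rpow (key s' ξ') (by norm_num))
    _ = ENNReal.ofReal (1/(2*ν)) := by
        rw [← ENNReal.rpow_add _ _ h0 ENNReal.ofReal_ne_top]
        norm_num

/-- The product-space integrand. -/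
noncomputable def PHI (ν : ℝ) (w : ℝ → E3 → ℝ≥0∞) (t : ℝ) (p : ℝ × E3) : ℝ≥0∞ :=
  cc t p.1 * kk ν t p.1 p.2 * w p.1 p.2

lemma PHI_meas {ν : ℝ} {w : ℝ → E3 → ℝ≥0∞} (hw : Measurable (Function.uncurry w)) :
    Measurable (fun z : ℝ × ℝ × E3 => PHI ν w z.1 z.2) := by
  unfold PHI
  exact (cc_meas.mul (kk_meas ν)).mul (hw.comp measurable_snd)

lemma main_aux {ν T : ℝ} (hν : 0 < ν) (hT : 0 < T)
    (w : ℝ → E3 → ℝ≥0∞) (hw : Measurable (Function.uncurry w)) :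
    ∫⁻ t in Icc (0:ℝ) T, (∫⁻ ξ, ∫⁻ s in Icc (0:ℝ) t, kk ν t s ξ * w s ξ) ^ 2
      ≤ ENNReal.ofReal (1/(2*ν)) * (∫⁻ s in Icc (0:ℝ) T, ∫⁻ ξ, w s ξ) ^ 2 := by
  set m : Measure (ℝ × E3) := (volume.restrict (Icc (0:ℝ) T)).prod volume with hm_def
  haveI hsf : SFinite m := by rw [hm_def]; infer_instance
  have hΦm := PHI_meas (ν := ν) hw
  -- Step 1 : rewrite the inner double integral as an integral over the product space
  have step1 : ∀ t ∈ Icc (0:ℝ) T,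
      (∫⁻ ξ, ∫⁻ s in Icc (0:ℝ) t, kk ν t s ξ * w s ξ) = ∫⁻ p, PHI ν w t p ∂m := by
    intro t ht
    have hsub : Icc (0:ℝ) t ⊆ Icc (0:ℝ) T := Icc_subset_Icc le_rfl ht.2
    have e1 : ∀ ξ : E3, ∫⁻ s in Icc (0:ℝ) t, kk ν t s ξ * w s ξ
        = ∫⁻ s in Icc (0:ℝ) T, PHI ν w t (s, ξ) := by
      intro ξ
      calc ∫⁻ s in Icc (0:ℝ) t, kk ν t s ξ * w s ξ
          = ∫⁻ s, (Icc (0:ℝ) t).indicator (fun s => kk ν t s ξ * w s ξ) s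
              ∂(volume.restrict (Icc (0:ℝ) T)) := by
            rw [lintegral_indicator measurableSet_Icc,
              Measure.restrict_restrict measurableSet_Icc, inter_eq_left.mpr hsub]
        _ = ∫⁻ s in Icc (0:ℝ) T, PHI ν w t (s, ξ) := by
            refine lintegral_congr fun s => ?_
            by_cases h : s ∈ Icc (0:ℝ) t
            · rw [Set.indicator_of_mem h, PHI, cc, if_pos (mem_Icc.mp h), one_mul]
            · rw [Set.indicator_of_notMem h, PHI, cc, if_neg (by simpa [mem_Icc] using h),
                zero_mul, zero_mul]
    rw [lintegral_congr e1]
    rw [lintegral_lintegral_swap]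
    · exact (lintegral_prod _ ((hΦm.comp
        (measurable_const.prodMk measurable_id)).aemeasurable)).symm
    · exact (hΦm.comp (measurable_const.prodMk
        (measurable_snd.prodMk measurable_fst))).aemeasurable
  -- Step 2 : expand the square over the doubled product space
  have step2 : ∀ t : ℝ, (∫⁻ p, PHI ν w t p ∂m) ^ 2
      = ∫⁻ r, PHI ν w t r.1 * PHI ν w t r.2 ∂(m.prod m) := by
    intro t
    have h1 : AEMeasurable (PHI ν w t) m :=
      (hΦm.comp (measurable_const.prodMk measurable_id)).aemeasurable
    rw [sq, ← lintegral_prod_mul h1 h1]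
  calc ∫⁻ t in Icc (0:ℝ) T, (∫⁻ ξ, ∫⁻ s in Icc (0:ℝ) t, kk ν t s ξ * w s ξ) ^ 2
      = ∫⁻ t in Icc (0:ℝ) T, ∫⁻ r, PHI ν w t r.1 * PHI ν w t r.2 ∂(m.prod m) := by
        refine setLIntegral_congr_fun measurableSet_Icc (fun t ht => ?_)
        rw [step1 t ht, step2 t]
    _ = ∫⁻ r, (∫⁻ t in Icc (0:ℝ) T, PHI ν w t r.1 * PHI ν w t r.2) ∂(m.prod m) := by
        apply lintegral_lintegral_swap
        exact ((hΦm.comp (measurable_fst.prodMk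
            (measurable_fst.comp measurable_snd))).mul
          (hΦm.comp (measurable_fst.prodMk
            (measurable_snd.comp measurable_snd)))).aemeasurable
    _ ≤ ∫⁻ r, (w r.1.1 r.1.2 * w r.2.1 r.2.2) * ENNReal.ofReal (1/(2*ν)) ∂(m.prod m) := by
        refine lintegral_mono fun r => ?_
        obtain ⟨⟨s, ξ⟩, ⟨s', ξ'⟩⟩ := r
        have e2 : ∀ t, PHI ν w t (s, ξ) * PHI ν w t (s', ξ')
            = (w s ξ * w s' ξ') * ((cc t s * kk ν t s ξ) * (cc t s' * kk ν t s' ξ')) := by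
          intro t; simp only [PHI]; ring
        rw [lintegral_congr e2, lintegral_const_mul'' _ ?_]
        · exact mul_le_mul_right (cs_core hν T s s' ξ ξ') _
        · exact ((ck_meas1 ν s ξ).mul (ck_meas1 ν s' ξ')).aemeasurable
    _ = (∫⁻ p, w p.1 p.2 ∂m) ^ 2 * ENNReal.ofReal (1/(2*ν)) := by
        have hww : AEMeasurable
            (fun r : (ℝ × E3) × (ℝ × E3) => w r.1.1 r.1.2 * w r.2.1 r.2.2) (m.prod m) :=
          ((hw.comp measurable_fst).mul (hw.comp measurable_snd)).aemeasurable
        rw [lintegral_mul_const'' _ hww, sq]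
        congr 1
        exact lintegral_prod_mul hw.aemeasurable hw.aemeasurable
    _ = ENNReal.ofReal (1/(2*ν)) * (∫⁻ s in Icc (0:ℝ) T, ∫⁻ ξ, w s ξ) ^ 2 := by
        rw [mul_comm]
        congr 2
        rw [hm_def]
        exact lintegral_prod _ hw.aemeasurable

/-- Proposition 2.2 (bilinear estimate): with
`H(t,ξ) = ∫₀ᵗ e^{−ν(t−s)|ξ|²} |ξ| (F(s,·) ∗ G(s,·))(ξ) ds`, one has
`‖H‖_{L²([0,T];χ⁰)} ≤ (2ν)^{−1/2} ‖F‖_{L²([0,T];χ⁰)} ‖G‖_{L²([0,T];χ⁰)}`. -/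
theorem stmt_2 (ν T : ℝ) (hν : 0 < ν) (hT : 0 < T)
    (F G : ℝ → EuclideanSpace ℝ (Fin 3) → ENNReal)
    (hF : Measurable (Function.uncurry F)) (hG : Measurable (Function.uncurry G))
    (H : ℝ → EuclideanSpace ℝ (Fin 3) → ENNReal)
    (hH : ∀ t ξ, H t ξ =
      ∫⁻ s in Set.Icc (0 : ℝ) t,
        ENNReal.ofReal (Real.exp (-ν * (t - s) * ‖ξ‖ ^ 2)) * ENNReal.ofReal ‖ξ‖ *
          ∫⁻ η, F s η * G s (ξ - η)) :
    (∫⁻ t in Set.Icc (0 : ℝ) T, (∫⁻ ξ, H t ξ) ^ 2) ^ (1 / 2 : ℝ) ≤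
      (ENNReal.ofReal (2 * ν)) ^ (-(1 / 2) : ℝ) *
        ((∫⁻ s in Set.Icc (0 : ℝ) T, (∫⁻ ξ, F s ξ) ^ 2) ^ (1 / 2 : ℝ) *
          (∫⁻ s in Set.Icc (0 : ℝ) T, (∫⁻ ξ, G s ξ) ^ 2) ^ (1 / 2 : ℝ)) := by
  set w : ℝ → E3 → ℝ≥0∞ := fun s ξ => ∫⁻ η, F s η * G s (ξ - η) with hw_def
  have hw : Measurable (Function.uncurry w) := by
    apply Measurable.lintegral_prod_right'
      (f := fun z : (ℝ × E3) × E3 => F z.1.1 z.2 * G z.1.1 (z.1.2 - z.2))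
    exact (hF.comp ((measurable_fst.comp measurable_fst).prodMk measurable_snd)).mul
      (hG.comp ((measurable_fst.comp measurable_fst).prodMk
        ((measurable_snd.comp measurable_fst).sub measurable_snd)))
  have hfm : Measurable fun s => ∫⁻ ξ, F s ξ := hF.lintegral_prod_right'
  have hgm : Measurable fun s => ∫⁻ ξ, G s ξ := hG.lintegral_prod_right'
  -- rewrite H
  have hHint : ∀ t, (∫⁻ ξ, H t ξ)
      = ∫⁻ ξ, ∫⁻ s in Icc (0:ℝ) t, kk ν t s ξ * w s ξ := by
    intro t
    refine lintegral_congr fun ξ => ?_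
    rw [hH]
    refine lintegral_congr fun s => ?_
    rw [kk, ENNReal.ofReal_mul (Real.exp_nonneg _)]
  -- convolution integral
  have hwint : ∀ s, ∫⁻ ξ, w s ξ = (∫⁻ ξ, F s ξ) * (∫⁻ ξ, G s ξ) := by
    intro s
    have hFs : Measurable (F s) := hF.comp (measurable_const.prodMk measurable_id)
    have hGs : Measurable (G s) := hG.comp (measurable_const.prodMk measurable_id)
    calc ∫⁻ ξ, w s ξ = ∫⁻ η, ∫⁻ ξ, F s η * G s (ξ - η) := by
          rw [hw_def]
          apply lintegral_lintegral_swap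
          exact ((hFs.comp measurable_snd).mul
            (hGs.comp (measurable_fst.sub measurable_snd))).aemeasurable
      _ = ∫⁻ η, F s η * ∫⁻ ξ, G s (ξ - η) := by
          refine lintegral_congr fun η => ?_
          have hGsub : Measurable fun ξ : E3 => G s (ξ - η) :=
            hGs.comp (measurable_id.sub measurable_const)
          rw [lintegral_const_mul _ hGsub]
      _ = ∫⁻ η, F s η * ∫⁻ ξ, G s ξ := by
          refine lintegral_congr fun η => ?_
          rw [lintegral_sub_right_eq_self (G s) η]
      _ = (∫⁻ ξ, F s ξ) * (∫⁻ ξ, G s ξ) := lintegral_mul_const'' _ hFs.aemeasurable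
  -- the main quadratic bound
  have hmain : ∫⁻ t in Icc (0:ℝ) T, (∫⁻ ξ, H t ξ) ^ 2
      ≤ ENNReal.ofReal (1/(2*ν)) * (∫⁻ s in Icc (0:ℝ) T, (∫⁻ ξ, F s ξ) * (∫⁻ ξ, G s ξ)) ^ 2 := by
    have h1 : ∫⁻ t in Icc (0:ℝ) T, (∫⁻ ξ, H t ξ) ^ 2
        = ∫⁻ t in Icc (0:ℝ) T, (∫⁻ ξ, ∫⁻ s in Icc (0:ℝ) t, kk ν t s ξ * w s ξ) ^ 2 :=
      lintegral_congr fun t => by rw [hHint]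
    have h2 : ∫⁻ s in Icc (0:ℝ) T, ∫⁻ ξ, w s ξ
        = ∫⁻ s in Icc (0:ℝ) T, (∫⁻ ξ, F s ξ) * (∫⁻ ξ, G s ξ) :=
      lintegral_congr fun s => hwint s
    have h3 := main_aux hν hT w hw
    rw [h2] at h3
    rw [h1]
    exact h3
  -- Cauchy–Schwarz in time
  have hCS : ∫⁻ s in Icc (0:ℝ) T, (∫⁻ ξ, F s ξ) * (∫⁻ ξ, G s ξ)
      ≤ (∫⁻ s in Icc (0:ℝ) T, (∫⁻ ξ, F s ξ) ^ 2) ^ (1/2:ℝ)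
        * (∫⁻ s in Icc (0:ℝ) T, (∫⁻ ξ, G s ξ) ^ 2) ^ (1/2:ℝ) := by
    have hpq : (2:ℝ).HolderConjugate 2 := .two_two
    have h := ENNReal.lintegral_mul_le_Lp_mul_Lq (volume.restrict (Icc (0:ℝ) T)) hpq
      hfm.aemeasurable hgm.aemeasurable
    simp only [Pi.mul_apply] at h
    have e1 : ∫⁻ s in Icc (0:ℝ) T, (∫⁻ ξ, F s ξ) ^ 2
        = ∫⁻ s in Icc (0:ℝ) T, (∫⁻ ξ, F s ξ) ^ (2:ℝ) :=
      lintegral_congr fun s => by rw [← ENNReal.rpow_natCast _ 2]; norm_num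
    have e2 : ∫⁻ s in Icc (0:ℝ) T, (∫⁻ ξ, G s ξ) ^ 2
        = ∫⁻ s in Icc (0:ℝ) T, (∫⁻ ξ, G s ξ) ^ (2:ℝ) :=
      lintegral_congr fun s => by rw [← ENNReal.rpow_natCast _ 2]; norm_num
    rw [e1, e2]
    exact h
  -- final assembly
  have hC0 : ENNReal.ofReal (1/(2*ν)) = (ENNReal.ofReal (2*ν))⁻¹ := by
    rw [one_div, ENNReal.ofReal_inv_of_pos (by positivity)]
  have hChalf : (ENNReal.ofReal (1/(2*ν))) ^ (1/2:ℝ)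
      = (ENNReal.ofReal (2*ν)) ^ (-(1/2):ℝ) := by
    rw [hC0, ENNReal.rpow_neg, ← ENNReal.inv_rpow]
  have hsq : ∀ x : ℝ≥0∞, (x ^ 2) ^ (1/2:ℝ) = x := by
    intro x
    rw [← ENNReal.rpow_natCast x 2, ← ENNReal.rpow_mul]
    norm_num
  calc (∫⁻ t in Icc (0:ℝ) T, (∫⁻ ξ, H t ξ) ^ 2) ^ (1/2:ℝ)
      ≤ (ENNReal.ofReal (1/(2*ν))
          * (∫⁻ s in Icc (0:ℝ) T, (∫⁻ ξ, F s ξ) * (∫⁻ ξ, G s ξ)) ^ 2) ^ (1/2:ℝ) :=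
        ENNReal.rpow_le_rpow hmain (by norm_num)
    _ = (ENNReal.ofReal (2*ν)) ^ (-(1/2):ℝ)
          * (∫⁻ s in Icc (0:ℝ) T, (∫⁻ ξ, F s ξ) * (∫⁻ ξ, G s ξ)) := by
        rw [ENNReal.mul_rpow_of_nonneg _ _ (by norm_num), hChalf, hsq]
    _ ≤ (ENNReal.ofReal (2*ν)) ^ (-(1/2):ℝ)
          * ((∫⁻ s in Icc (0:ℝ) T, (∫⁻ ξ, F s ξ) ^ 2) ^ (1/2:ℝ)
            * (∫⁻ s in Icc (0:ℝ) T, (∫⁻ ξ, G s ξ) ^ 2) ^ (1/2:ℝ)) :=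
        mul_le_mul_right hCS _
end

section
/- Let ν > 0, T > 0, and let F : ℝ³ → [0,∞) be measurable. Then ( ∫₀ᵀ ( ∫_{ℝ³} e^{−νt|ξ|²} F(ξ) dξ )² dt )^{1/2} ≤ (2ν)^{−1/2} ∫_{ℝ³} |ξ|⁻¹ F(ξ) dξ. -/
open MeasureTheory

lemma time_int (T c : ℝ) (hT : 0 < T) (hc : 0 < c) :
    ∫⁻ t in Set.Icc (0:ℝ) T, ENNReal.ofReal (Real.exp (-(c*t))) ≤ ENNReal.ofReal (1/c) := by
  have hcont : Continuous fun t : ℝ => Real.exp (-(c*t)) := by continuity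
  have hInt : IntegrableOn (fun t : ℝ => Real.exp (-(c*t))) (Set.Icc 0 T) :=
    hcont.integrableOn_Icc
  rw [← ofReal_integral_eq_lintegral_ofReal hInt
    (Filter.Eventually.of_forall fun t => (Real.exp_nonneg _))]
  apply ENNReal.ofReal_le_ofReal
  rw [MeasureTheory.integral_Icc_eq_integral_Ioc, ← intervalIntegral.integral_of_le hT.le]
  have hderiv : ∀ t ∈ Set.uIcc (0:ℝ) T,
      HasDerivAt (fun s => -Real.exp (-(c*s))/c) (Real.exp (-(c*t))) t := by
    intro t _
    have h1 : HasDerivAt (fun s : ℝ => -(c*s)) (-c) t := by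
      exact ((hasDerivAt_id t).const_mul c).neg.congr_deriv (by simp)
    have h2 := (h1.exp.neg).div_const c
    refine h2.congr_deriv ?_
    rw [mul_neg, neg_neg, mul_div_assoc, div_self hc.ne', mul_one]
  rw [intervalIntegral.integral_eq_sub_of_hasDerivAt hderiv (hcont.intervalIntegrable 0 T)]
  have h3 : (0:ℝ) ≤ Real.exp (-(c*T)) := Real.exp_nonneg _
  rw [mul_zero, neg_zero, Real.exp_zero]
  rw [div_sub_div_same]
  gcongr
  nlinarith [Real.exp_nonneg (-(c*T))]

lemma lkey (ν T : ℝ) (hν : 0 < ν) (hT : 0 < T) (p q : ℝ) (hp : 0 ≤ p) (hq : 0 ≤ q)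
    (A B : ENNReal) :
    (∫⁻ t in Set.Icc (0:ℝ) T,
      (ENNReal.ofReal (Real.exp (-ν * t * p ^ 2)) * A) *
        (ENNReal.ofReal (Real.exp (-ν * t * q ^ 2)) * B)) ≤
      (ENNReal.ofReal (2*ν))⁻¹ * ((ENNReal.ofReal p)⁻¹ * A * ((ENNReal.ofReal q)⁻¹ * B)) := by
  set c : ℝ := ν * (p^2 + q^2) with hc
  have hstep : ∀ t : ℝ,
      (ENNReal.ofReal (Real.exp (-ν * t * p ^ 2)) * A) *
        (ENNReal.ofReal (Real.exp (-ν * t * q ^ 2)) * B)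
      = ENNReal.ofReal (Real.exp (-(c*t))) * (A * B) := by
    intro t
    rw [mul_mul_mul_comm, ← ENNReal.ofReal_mul (Real.exp_nonneg _), ← Real.exp_add]
    congr 2
    congr 1
    rw [hc]
    ring
  simp_rw [hstep]
  rw [lintegral_mul_const (A*B)
    (show Measurable fun t : ℝ => ENNReal.ofReal (Real.exp (-(c*t))) by fun_prop)]
  rcases eq_or_ne A 0 with rfl | hA
  · simp
  rcases eq_or_ne B 0 with rfl | hB
  · simp
  rcases eq_or_lt_of_le hp with rfl | hp'
  · have h1 : ((ENNReal.ofReal (0:ℝ))⁻¹ : ENNReal) = ⊤ := by simp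
    rw [h1]
    have h2 : (⊤ : ENNReal) * A = ⊤ := ENNReal.top_mul hA
    rw [h2]
    have h3 : ((ENNReal.ofReal q)⁻¹ * B) ≠ 0 :=
      mul_ne_zero (ENNReal.inv_ne_zero.mpr ENNReal.ofReal_ne_top) hB
    rw [ENNReal.top_mul h3, ENNReal.mul_top
      (ENNReal.inv_ne_zero.mpr ENNReal.ofReal_ne_top)]
    exact le_top
  rcases eq_or_lt_of_le hq with rfl | hq'
  · have h1 : ((ENNReal.ofReal (0:ℝ))⁻¹ : ENNReal) = ⊤ := by simp
    rw [h1]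
    have h2 : (⊤ : ENNReal) * B = ⊤ := ENNReal.top_mul hB
    rw [h2]
    have h3 : ((ENNReal.ofReal p)⁻¹ * A) ≠ 0 :=
      mul_ne_zero (ENNReal.inv_ne_zero.mpr ENNReal.ofReal_ne_top) hA
    rw [ENNReal.mul_top h3, ENNReal.mul_top
      (ENNReal.inv_ne_zero.mpr ENNReal.ofReal_ne_top)]
    exact le_top
  -- main case
  have hcpos : 0 < c := by positivity
  have key : (ENNReal.ofReal (2*ν))⁻¹ * ((ENNReal.ofReal p)⁻¹ * A * ((ENNReal.ofReal q)⁻¹ * B))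
      = ENNReal.ofReal (1/(2*ν*p*q)) * (A * B) := by
    have e1 : ENNReal.ofReal (1/(2*ν*p*q))
        = (ENNReal.ofReal (2*ν))⁻¹ * (ENNReal.ofReal p)⁻¹ * (ENNReal.ofReal q)⁻¹ := by
      rw [one_div, ENNReal.ofReal_inv_of_pos (by positivity)]
      rw [show (2*ν*p*q) = (2*ν)*p*q by ring]
      rw [ENNReal.ofReal_mul (by positivity), ENNReal.ofReal_mul (by positivity)]
      rw [ENNReal.mul_inv (Or.inr ENNReal.ofReal_ne_top)
        (Or.inr (ENNReal.ofReal_pos.mpr hq').ne')]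
      rw [ENNReal.mul_inv (Or.inr ENNReal.ofReal_ne_top)
        (Or.inr (ENNReal.ofReal_pos.mpr hp').ne')]
    rw [e1]; ring
  rw [key]
  refine mul_le_mul_left ?_ _
  calc ∫⁻ t in Set.Icc (0:ℝ) T, ENNReal.ofReal (Real.exp (-(c*t)))
      ≤ ENNReal.ofReal (1/c) := time_int T c hT hcpos
    _ ≤ ENNReal.ofReal (1/(2*ν*p*q)) := by
        apply ENNReal.ofReal_le_ofReal
        apply one_div_le_one_div_of_le (by positivity)
        rw [hc]; nlinarith [mul_nonneg hν.le (sq_nonneg (p-q))]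

lemma Gmeas {α : Type*} [MeasurableSpace α] (ν : ℝ)
    (F : EuclideanSpace ℝ (Fin 3) → ENNReal) (hF : Measurable F)
    {g : α → ℝ} {h : α → EuclideanSpace ℝ (Fin 3)}
    (hg : Measurable g) (hh : Measurable h) :
    Measurable fun a => ENNReal.ofReal (Real.exp (-ν * g a * ‖h a‖ ^ 2)) * F (h a) :=
  (ENNReal.measurable_ofReal.comp (Real.measurable_exp.comp
    ((hg.const_mul (-ν)).mul (hh.norm.pow_const 2)))).mul (hF.comp hh)

set_option maxHeartbeats 1000000 in
/-- Heat semigroup estimate (3.1):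
`‖e^{νtΔ}u₀‖_{L²([0,T];χ⁰)} ≤ (2ν)^{−1/2} ‖u₀‖_{χ^{−1}}`, stated on the Fourier
side for `F = |û₀|`. -/
theorem stmt_3 (ν T : ℝ) (hν : 0 < ν) (hT : 0 < T)
    (F : EuclideanSpace ℝ (Fin 3) → ENNReal) (hF : Measurable F) :
    (∫⁻ t in Set.Icc (0 : ℝ) T,
        (∫⁻ ξ, ENNReal.ofReal (Real.exp (-ν * t * ‖ξ‖ ^ 2)) * F ξ) ^ 2) ^ (1 / 2 : ℝ) ≤
      (ENNReal.ofReal (2 * ν)) ^ (-(1 / 2) : ℝ) * ∫⁻ ξ, (ENNReal.ofReal ‖ξ‖)⁻¹ * F ξ := by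
  set G : ℝ → EuclideanSpace ℝ (Fin 3) → ENNReal :=
    fun t ξ => ENNReal.ofReal (Real.exp (-ν * t * ‖ξ‖ ^ 2)) * F ξ with hG
  have hGt : ∀ t : ℝ, Measurable (G t) := fun t =>
    Gmeas ν F hF measurable_const measurable_id
  set u : EuclideanSpace ℝ (Fin 3) → ENNReal := fun ξ => (ENNReal.ofReal ‖ξ‖)⁻¹ * F ξ with hu
  have hum : Measurable u := by
    apply Measurable.mul ?_ hF
    exact (ENNReal.measurable_ofReal.comp measurable_norm).inv
  set B := ∫⁻ ξ, u ξ with hB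
  set c := ENNReal.ofReal (2 * ν) with hcdef
  have hXle : (∫⁻ t in Set.Icc (0:ℝ) T, (∫⁻ ξ, G t ξ) ^ 2) ≤ c⁻¹ * B ^ 2 := by
    have e1 : ∀ t : ℝ, (∫⁻ ξ, G t ξ) ^ 2 = ∫⁻ ξ, ∫⁻ η, G t ξ * G t η := by
      intro t
      rw [sq, ← lintegral_lintegral_mul (hGt t).aemeasurable (hGt t).aemeasurable]
    simp_rw [e1]
    have hHm : Measurable fun p : (ℝ × EuclideanSpace ℝ (Fin 3)) × EuclideanSpace ℝ (Fin 3) =>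
        G p.1.1 p.1.2 * G p.1.1 p.2 :=
      (Gmeas ν F hF measurable_fst.fst measurable_fst.snd).mul
        (Gmeas ν F hF measurable_fst.fst measurable_snd)
    rw [lintegral_lintegral_swap (Measurable.lintegral_prod_right' hHm).aemeasurable]
    have e2 : ∀ ξ : EuclideanSpace ℝ (Fin 3),
        (∫⁻ t in Set.Icc (0:ℝ) T, ∫⁻ η, G t ξ * G t η) =
        ∫⁻ η, ∫⁻ t in Set.Icc (0:ℝ) T, G t ξ * G t η := by
      intro ξ
      apply lintegral_lintegral_swap
      exact ((Gmeas ν F hF measurable_fst measurable_const).mul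
        (Gmeas ν F hF measurable_fst measurable_snd)).aemeasurable
    simp_rw [e2]
    calc (∫⁻ ξ, ∫⁻ η, ∫⁻ t in Set.Icc (0:ℝ) T, G t ξ * G t η)
        ≤ ∫⁻ ξ, ∫⁻ η, c⁻¹ * (u ξ * u η) := by
          refine lintegral_mono fun ξ => lintegral_mono fun η => ?_
          have := lkey ν T hν hT ‖ξ‖ ‖η‖ (norm_nonneg _) (norm_nonneg _) (F ξ) (F η)
          calc (∫⁻ t in Set.Icc (0:ℝ) T, G t ξ * G t η)
              ≤ c⁻¹ * ((ENNReal.ofReal ‖ξ‖)⁻¹ * F ξ * ((ENNReal.ofReal ‖η‖)⁻¹ * F η)) := this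
            _ = c⁻¹ * (u ξ * u η) := by rw [hu]
      _ = c⁻¹ * B ^ 2 := by
          simp_rw [show ∀ ξ η : EuclideanSpace ℝ (Fin 3),
              c⁻¹ * (u ξ * u η) = c⁻¹ * u ξ * u η from fun _ _ => by ring,
            lintegral_const_mul _ hum,
            ← hB,
            show ∀ ξ : EuclideanSpace ℝ (Fin 3),
              c⁻¹ * u ξ * B = c⁻¹ * B * u ξ from fun _ => by ring,
            lintegral_const_mul _ hum]
          rw [sq]; ring
  have hfin : (c⁻¹ * B ^ 2) ^ (1/2 : ℝ) = c ^ (-(1/2) : ℝ) * B := by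
    rw [ENNReal.mul_rpow_of_nonneg _ _ (by norm_num)]
    congr 1
    · rw [← ENNReal.rpow_neg_one c, ← ENNReal.rpow_mul]
      norm_num
    · rw [← ENNReal.rpow_natCast B 2, ← ENNReal.rpow_mul]
      norm_num
  exact (ENNReal.rpow_le_rpow hXle (by norm_num)).trans_eq hfin
end

section
/- Let ν > 0, T > 0, and let F, G : [0,T] × ℝ³ → [0,∞) be measurable. Define H(t,ξ) = ∫₀ᵗ e^{−ν(t−s)|ξ|²} |ξ| (F(s,·) ∗ G(s,·))(ξ) ds, where ∗ denotes convolution in ξ on ℝ³. Then for every t ∈ [0,T], ∫_{ℝ³} |ξ|⁻¹ H(t,ξ) dξ ≤ ( ∫₀ᵀ ( ∫_{ℝ³} F(s,ξ) dξ )² ds )^{1/2} ( ∫₀ᵀ ( ∫_{ℝ³} G(s,ξ) dξ )² ds )^{1/2}. -/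
open MeasureTheory

/-- Bilinear L^∞-χ^{−1} estimate: with
`H(t,ξ) = ∫₀ᵗ e^{−ν(t−s)|ξ|²} |ξ| (F(s,·) ∗ G(s,·))(ξ) ds`, for every `t ∈ [0,T]`,
`‖H(t)‖_{χ^{−1}} ≤ ‖F‖_{L²([0,T];χ⁰)} ‖G‖_{L²([0,T];χ⁰)}`. -/
theorem stmt_5 (ν T : ℝ) (hν : 0 < ν) (hT : 0 < T)
    (F G : ℝ → EuclideanSpace ℝ (Fin 3) → ENNReal)
    (hF : Measurable (Function.uncurry F)) (hG : Measurable (Function.uncurry G))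
    (H : ℝ → EuclideanSpace ℝ (Fin 3) → ENNReal)
    (hH : ∀ t ξ, H t ξ =
      ∫⁻ s in Set.Icc (0 : ℝ) t,
        ENNReal.ofReal (Real.exp (-ν * (t - s) * ‖ξ‖ ^ 2)) * ENNReal.ofReal ‖ξ‖ *
          ∫⁻ η, F s η * G s (ξ - η)) :
    ∀ t ∈ Set.Icc (0 : ℝ) T,
      ∫⁻ ξ, (ENNReal.ofReal ‖ξ‖)⁻¹ * H t ξ ≤
        (∫⁻ s in Set.Icc (0 : ℝ) T, (∫⁻ ξ, F s ξ) ^ 2) ^ (1 / 2 : ℝ) *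
          (∫⁻ s in Set.Icc (0 : ℝ) T, (∫⁻ ξ, G s ξ) ^ 2) ^ (1 / 2 : ℝ) := by
  intro t ht
  obtain ⟨ht0, htT⟩ := ht
  have hGm : ∀ s, Measurable (G s) := fun s => hG.comp (measurable_prodMk_left)
  have hFm : ∀ s, Measurable (F s) := fun s => hF.comp (measurable_prodMk_left)
  -- measurability of the convolution kernel
  have mK : Measurable (fun p : ℝ × EuclideanSpace ℝ (Fin 3) =>
      ∫⁻ η, F p.1 η * G p.1 (p.2 - η)) := by
    have : Measurable (fun q : (ℝ × EuclideanSpace ℝ (Fin 3)) × EuclideanSpace ℝ (Fin 3) =>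
        F q.1.1 q.2 * G q.1.1 (q.1.2 - q.2)) :=
      (hF.comp (measurable_fst.fst.prodMk measurable_snd)).mul
        (hG.comp (measurable_fst.fst.prodMk (measurable_fst.snd.sub measurable_snd)))
    exact this.lintegral_prod_right'
  have key : ∀ ξ : EuclideanSpace ℝ (Fin 3), (ENNReal.ofReal ‖ξ‖)⁻¹ * H t ξ ≤
      ∫⁻ s in Set.Icc (0 : ℝ) t, ∫⁻ η, F s η * G s (ξ - η) := by
    intro ξ
    rw [hH]
    refine le_trans (lintegral_const_mul_le _ _) ?_
    refine lintegral_mono_ae ((ae_restrict_iff' measurableSet_Icc).2 (ae_of_all _ fun s hs => ?_))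
    have he : ENNReal.ofReal (Real.exp (-ν * (t - s) * ‖ξ‖ ^ 2)) ≤ 1 := by
      rw [ENNReal.ofReal_le_one]
      apply Real.exp_le_one_iff.2
      nlinarith [sq_nonneg ‖ξ‖, hs.2, hν.le,
        mul_nonneg (mul_nonneg hν.le (sub_nonneg.2 hs.2)) (sq_nonneg ‖ξ‖)]
    have h1 : (ENNReal.ofReal ‖ξ‖)⁻¹ * ENNReal.ofReal ‖ξ‖ ≤ 1 := by
      rcases eq_or_ne (ENNReal.ofReal ‖ξ‖) 0 with h | h
      · simp [h]
      · rw [ENNReal.inv_mul_cancel h ENNReal.ofReal_ne_top]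
    calc (ENNReal.ofReal ‖ξ‖)⁻¹ *
        (ENNReal.ofReal (Real.exp (-ν * (t - s) * ‖ξ‖ ^ 2)) * ENNReal.ofReal ‖ξ‖ *
          ∫⁻ η, F s η * G s (ξ - η))
        ≤ (ENNReal.ofReal ‖ξ‖)⁻¹ * (1 * ENNReal.ofReal ‖ξ‖ * ∫⁻ η, F s η * G s (ξ - η)) := by
          gcongr
      _ = ((ENNReal.ofReal ‖ξ‖)⁻¹ * ENNReal.ofReal ‖ξ‖) * ∫⁻ η, F s η * G s (ξ - η) := by
          ring
      _ ≤ 1 * ∫⁻ η, F s η * G s (ξ - η) := by gcongr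
      _ = _ := one_mul _
  calc ∫⁻ ξ, (ENNReal.ofReal ‖ξ‖)⁻¹ * H t ξ
      ≤ ∫⁻ ξ, ∫⁻ s in Set.Icc (0 : ℝ) t, ∫⁻ η, F s η * G s (ξ - η) :=
        lintegral_mono key
    _ = ∫⁻ s in Set.Icc (0 : ℝ) t, ∫⁻ ξ, ∫⁻ η, F s η * G s (ξ - η) := by
        rw [lintegral_lintegral_swap]
        exact (mK.comp measurable_swap).aemeasurable
    _ = ∫⁻ s in Set.Icc (0 : ℝ) t, (∫⁻ ξ, F s ξ) * (∫⁻ ξ, G s ξ) := by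
        refine setLIntegral_congr_fun measurableSet_Icc (fun s _ => ?_)
        rw [lintegral_lintegral_swap
          (((hFm s).comp measurable_snd).mul
            ((hGm s).comp (measurable_fst.sub measurable_snd))).aemeasurable]
        calc ∫⁻ η, ∫⁻ ξ, F s η * G s (ξ - η)
            = ∫⁻ η, F s η * ∫⁻ ξ, G s (ξ - η) := by
              refine lintegral_congr fun η => ?_
              exact lintegral_const_mul (F s η)
                ((hGm s).comp (measurable_id.sub measurable_const))
          _ = ∫⁻ η, F s η * ∫⁻ ξ, G s ξ := by
              refine lintegral_congr fun η => ?_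
              rw [lintegral_sub_right_eq_self (G s) η]
          _ = (∫⁻ ξ, F s ξ) * (∫⁻ ξ, G s ξ) := lintegral_mul_const _ (hFm s)
    _ ≤ ∫⁻ s in Set.Icc (0 : ℝ) T, (∫⁻ ξ, F s ξ) * (∫⁻ ξ, G s ξ) :=
        lintegral_mono_set (Set.Icc_subset_Icc le_rfl htT)
    _ ≤ _ := by
        have hpq : Real.HolderConjugate 2 2 := by constructor <;> norm_num
        have hA : AEMeasurable (fun s => ∫⁻ ξ, F s ξ)
            (volume.restrict (Set.Icc (0 : ℝ) T)) := hF.lintegral_prod_right'.aemeasurable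
        have hB : AEMeasurable (fun s => ∫⁻ ξ, G s ξ)
            (volume.restrict (Set.Icc (0 : ℝ) T)) := hG.lintegral_prod_right'.aemeasurable
        have h := ENNReal.lintegral_mul_le_Lp_mul_Lq
          (volume.restrict (Set.Icc (0 : ℝ) T)) hpq hA hB
        simp only [Pi.mul_apply, ENNReal.rpow_two] at h
        exact h
end

section
/- Let T > 0 and let F, G : [0,T] × ℝ³ → [0,∞) be measurable. Then ∫₀ᵀ ∫_{ℝ³} (F(s,·) ∗ G(s,·))(ξ) dξ ds ≤ ( ∫₀ᵀ ( ∫_{ℝ³} F(s,ξ) dξ )² ds )^{1/2} ( ∫₀ᵀ ( ∫_{ℝ³} G(s,ξ) dξ )² ds )^{1/2} ≤ ( ess sup_{s∈[0,T]} ∫ |ξ|⁻¹ F(s,ξ) dξ )^{1/2} ( ∫₀ᵀ ∫ |ξ| F(s,ξ) dξ ds )^{1/2} ( ess sup_{s∈[0,T]} ∫ |ξ|⁻¹ G(s,ξ) dξ )^{1/2} ( ∫₀ᵀ ∫ |ξ| G(s,ξ) dξ ds )^{1/2}, where ∗ denotes convolution in ξ on ℝ³. -/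
open MeasureTheory

/-- Estimate (3.4) for the nonlinearity:
`∫₀ᵀ∫ (F∗G) ≤ ‖F‖_{L²([0,T];χ⁰)} ‖G‖_{L²([0,T];χ⁰)}
  ≤ ‖F‖_{L^∞χ^{−1}}^{1/2} ‖F‖_{L¹χ¹}^{1/2} ‖G‖_{L^∞χ^{−1}}^{1/2} ‖G‖_{L¹χ¹}^{1/2}`. -/
theorem stmt_7 (T : ℝ) (hT : 0 < T)
    (F G : ℝ → EuclideanSpace ℝ (Fin 3) → ENNReal)
    (hF : Measurable (Function.uncurry F)) (hG : Measurable (Function.uncurry G)) :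
    (∫⁻ s in Set.Icc (0 : ℝ) T, ∫⁻ ξ, ∫⁻ η, F s η * G s (ξ - η)) ≤
        (∫⁻ s in Set.Icc (0 : ℝ) T, (∫⁻ ξ, F s ξ) ^ 2) ^ (1 / 2 : ℝ) *
          (∫⁻ s in Set.Icc (0 : ℝ) T, (∫⁻ ξ, G s ξ) ^ 2) ^ (1 / 2 : ℝ) ∧
      (∫⁻ s in Set.Icc (0 : ℝ) T, (∫⁻ ξ, F s ξ) ^ 2) ^ (1 / 2 : ℝ) *
          (∫⁻ s in Set.Icc (0 : ℝ) T, (∫⁻ ξ, G s ξ) ^ 2) ^ (1 / 2 : ℝ) ≤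
        (essSup (fun s => ∫⁻ ξ, (ENNReal.ofReal ‖ξ‖)⁻¹ * F s ξ)
            (volume.restrict (Set.Icc (0 : ℝ) T))) ^ (1 / 2 : ℝ) *
          (∫⁻ s in Set.Icc (0 : ℝ) T, ∫⁻ ξ, ENNReal.ofReal ‖ξ‖ * F s ξ) ^ (1 / 2 : ℝ) *
          (essSup (fun s => ∫⁻ ξ, (ENNReal.ofReal ‖ξ‖)⁻¹ * G s ξ)
            (volume.restrict (Set.Icc (0 : ℝ) T))) ^ (1 / 2 : ℝ) *
          (∫⁻ s in Set.Icc (0 : ℝ) T, ∫⁻ ξ, ENNReal.ofReal ‖ξ‖ * G s ξ) ^ (1 / 2 : ℝ) := by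
  have h22 : (2 : ℝ).HolderConjugate 2 := by
    constructor <;> norm_num
  have hFs : ∀ s, Measurable (F s) := fun s => hF.comp measurable_prodMk_left
  have hGs : ∀ s, Measurable (G s) := fun s => hG.comp measurable_prodMk_left
  have hmF : Measurable fun s => ∫⁻ ξ, F s ξ := hF.lintegral_prod_right'
  have hmG : Measurable fun s => ∫⁻ ξ, G s ξ := hG.lintegral_prod_right'
  -- convolution integral = product of integrals
  have hconv : ∀ s, (∫⁻ ξ, ∫⁻ η, F s η * G s (ξ - η)) =
      (∫⁻ ξ, F s ξ) * (∫⁻ ξ, G s ξ) := by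
    intro s
    rw [lintegral_lintegral_swap]
    · have : ∀ η, (∫⁻ ξ, F s η * G s (ξ - η)) = F s η * ∫⁻ ξ, G s ξ := by
        intro η
        have hmeas : AEMeasurable (fun ξ : EuclideanSpace ℝ (Fin 3) => G s (ξ - η)) volume :=
          ((hGs s).comp (measurable_id.sub measurable_const)).aemeasurable
        rw [lintegral_const_mul'' _ hmeas, lintegral_sub_right_eq_self (G s) η]
      simp_rw [this]
      rw [lintegral_mul_const _ (hFs s)]
    · exact (((hFs s).comp measurable_snd).mul
        ((hGs s).comp (measurable_fst.sub measurable_snd))).aemeasurable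
  -- Cauchy–Schwarz in time
  have part1 : (∫⁻ s in Set.Icc (0 : ℝ) T, ∫⁻ ξ, ∫⁻ η, F s η * G s (ξ - η)) ≤
      (∫⁻ s in Set.Icc (0 : ℝ) T, (∫⁻ ξ, F s ξ) ^ 2) ^ (1 / 2 : ℝ) *
        (∫⁻ s in Set.Icc (0 : ℝ) T, (∫⁻ ξ, G s ξ) ^ 2) ^ (1 / 2 : ℝ) := by
    simp_rw [hconv]
    have := ENNReal.lintegral_mul_le_Lp_mul_Lq
      (volume.restrict (Set.Icc (0 : ℝ) T)) h22 hmF.aemeasurable hmG.aemeasurable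
    simp_rw [ENNReal.rpow_two] at this
    simpa [Pi.mul_apply] using this
  refine ⟨part1, ?_⟩
  -- Cauchy–Schwarz in space, pointwise in s
  have key : ∀ (H : ℝ → EuclideanSpace ℝ (Fin 3) → ENNReal),
      Measurable (Function.uncurry H) → ∀ s,
      (∫⁻ ξ, H s ξ) ^ 2 ≤ (∫⁻ ξ, (ENNReal.ofReal ‖ξ‖)⁻¹ * H s ξ) *
        (∫⁻ ξ, ENNReal.ofReal ‖ξ‖ * H s ξ) := by
    intro H hH s
    have hHs : Measurable (H s) := hH.comp measurable_prodMk_left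
    set w : EuclideanSpace ℝ (Fin 3) → ENNReal := fun ξ => ENNReal.ofReal ‖ξ‖ with hw
    have hwm : Measurable w := ENNReal.measurable_ofReal.comp measurable_norm
    have hae : ∀ᵐ ξ : EuclideanSpace ℝ (Fin 3),
        H s ξ = ((w ξ)⁻¹ * H s ξ) ^ (1/2 : ℝ) * ((w ξ * H s ξ)) ^ (1/2 : ℝ) := by
      have h0 : ∀ᵐ ξ : EuclideanSpace ℝ (Fin 3), ξ ≠ 0 := by
        rw [ae_iff]
        simp [Set.setOf_eq_eq_singleton']
      filter_upwards [h0] with ξ hξ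
      have hw0 : w ξ ≠ 0 := by
        simp [hw, ENNReal.ofReal_eq_zero, not_le, norm_pos_iff, hξ]
      have hwt : w ξ ≠ ⊤ := ENNReal.ofReal_ne_top
      rw [← ENNReal.mul_rpow_of_nonneg _ _ (by norm_num : (0:ℝ) ≤ 1/2)]
      have : (w ξ)⁻¹ * H s ξ * (w ξ * H s ξ) = H s ξ ^ (2:ℝ) := by
        rw [mul_mul_mul_comm, ENNReal.inv_mul_cancel hw0 hwt, one_mul,
          ENNReal.rpow_two, sq]
      rw [this, ← ENNReal.rpow_mul]
      norm_num
    calc (∫⁻ ξ, H s ξ) ^ 2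
        = (∫⁻ ξ, ((w ξ)⁻¹ * H s ξ) ^ (1/2:ℝ) * (w ξ * H s ξ) ^ (1/2:ℝ)) ^ 2 := by
          rw [lintegral_congr_ae hae]
      _ ≤ ((∫⁻ ξ, (((w ξ)⁻¹ * H s ξ) ^ (1/2:ℝ)) ^ (2:ℝ)) ^ (1/2:ℝ) *
            (∫⁻ ξ, ((w ξ * H s ξ) ^ (1/2:ℝ)) ^ (2:ℝ)) ^ (1/2:ℝ)) ^ 2 := by
          gcongr
          exact ENNReal.lintegral_mul_le_Lp_mul_Lq volume h22
            ((hwm.inv.mul hHs).pow_const _).aemeasurable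
            ((hwm.mul hHs).pow_const _).aemeasurable
      _ = (∫⁻ ξ, (w ξ)⁻¹ * H s ξ) * (∫⁻ ξ, w ξ * H s ξ) := by
          simp_rw [← ENNReal.rpow_mul]
          norm_num
          rw [mul_pow, ← ENNReal.rpow_natCast (_ ^ (1/2:ℝ)) 2, ← ENNReal.rpow_natCast (_ ^ (1/2:ℝ)) 2,
            ← ENNReal.rpow_mul, ← ENNReal.rpow_mul]
          norm_num
  -- bound L² in time by essSup · L¹
  have bound : ∀ (H : ℝ → EuclideanSpace ℝ (Fin 3) → ENNReal),
      Measurable (Function.uncurry H) →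
      (∫⁻ s in Set.Icc (0 : ℝ) T, (∫⁻ ξ, H s ξ) ^ 2) ≤
        (essSup (fun s => ∫⁻ ξ, (ENNReal.ofReal ‖ξ‖)⁻¹ * H s ξ)
          (volume.restrict (Set.Icc (0 : ℝ) T))) *
        (∫⁻ s in Set.Icc (0 : ℝ) T, ∫⁻ ξ, ENNReal.ofReal ‖ξ‖ * H s ξ) := by
    intro H hH
    set e := essSup (fun s => ∫⁻ ξ, (ENNReal.ofReal ‖ξ‖)⁻¹ * H s ξ)
      (volume.restrict (Set.Icc (0 : ℝ) T)) with he
    have hesle : ∀ᵐ s ∂(volume.restrict (Set.Icc (0 : ℝ) T)),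
        (∫⁻ ξ, (ENNReal.ofReal ‖ξ‖)⁻¹ * H s ξ) ≤ e :=
      ae_le_essSup (Filter.isBoundedUnder_of ⟨⊤, fun _ => le_top⟩)
    have hm1 : Measurable fun s => ∫⁻ ξ, ENNReal.ofReal ‖ξ‖ * H s ξ :=
      Measurable.lintegral_prod_right'
        (f := fun p : ℝ × EuclideanSpace ℝ (Fin 3) => ENNReal.ofReal ‖p.2‖ * H p.1 p.2)
        (((ENNReal.measurable_ofReal.comp measurable_norm).comp measurable_snd).mul hH)
    calc (∫⁻ s in Set.Icc (0 : ℝ) T, (∫⁻ ξ, H s ξ) ^ 2)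
        ≤ ∫⁻ s in Set.Icc (0 : ℝ) T, e * ∫⁻ ξ, ENNReal.ofReal ‖ξ‖ * H s ξ := by
          apply lintegral_mono_ae
          filter_upwards [hesle] with s hs
          exact (key H hH s).trans (mul_le_mul_left hs _)
      _ = e * ∫⁻ s in Set.Icc (0 : ℝ) T, ∫⁻ ξ, ENNReal.ofReal ‖ξ‖ * H s ξ :=
          lintegral_const_mul e hm1
  have hb := bound F hF
  have hbG := bound G hG
  calc (∫⁻ s in Set.Icc (0 : ℝ) T, (∫⁻ ξ, F s ξ) ^ 2) ^ (1 / 2 : ℝ) *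
        (∫⁻ s in Set.Icc (0 : ℝ) T, (∫⁻ ξ, G s ξ) ^ 2) ^ (1 / 2 : ℝ)
      ≤ ((essSup (fun s => ∫⁻ ξ, (ENNReal.ofReal ‖ξ‖)⁻¹ * F s ξ)
            (volume.restrict (Set.Icc (0 : ℝ) T))) *
          (∫⁻ s in Set.Icc (0 : ℝ) T, ∫⁻ ξ, ENNReal.ofReal ‖ξ‖ * F s ξ)) ^ (1 / 2 : ℝ) *
        ((essSup (fun s => ∫⁻ ξ, (ENNReal.ofReal ‖ξ‖)⁻¹ * G s ξ)
            (volume.restrict (Set.Icc (0 : ℝ) T))) *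
          (∫⁻ s in Set.Icc (0 : ℝ) T, ∫⁻ ξ, ENNReal.ofReal ‖ξ‖ * G s ξ)) ^ (1 / 2 : ℝ) := by
        gcongr
    _ = _ := by
        rw [ENNReal.mul_rpow_of_nonneg _ _ (by norm_num : (0:ℝ) ≤ 1/2),
          ENNReal.mul_rpow_of_nonneg _ _ (by norm_num : (0:ℝ) ≤ 1/2)]
        ring
end

section
/- Let ν > 0, T > 0, let V₀ : ℝ³ → ℂ and f : [0,T] × ℝ³ → ℂ be measurable with ∫_{ℝ³} |ξ|⁻¹ |V₀(ξ)| dξ < ∞ and ∫₀ᵀ ∫_{ℝ³} |ξ|⁻¹ |f(s,ξ)| dξ ds < ∞, and define V(t,ξ) = e^{−νt|ξ|²} V₀(ξ) + ∫₀ᵗ e^{−ν(t−s)|ξ|²} f(s,ξ) ds. Then for every t₀ ∈ [0,T], sup_{0 ≤ t ≤ t₀} ∫_{ℝ³} |ξ|⁻¹ |V(t,ξ)| dξ + ν ∫₀^{t₀} ∫_{ℝ³} |ξ| |V(t,ξ)| dξ dt ≤ 2 ( ∫_{ℝ³} |ξ|⁻¹ |V₀(ξ)| dξ + ∫₀^{t₀}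 ∫_{ℝ³} |ξ|⁻¹ |f(s,ξ)| dξ ds ). -/
open MeasureTheory Set Real
open scoped ENNReal NNReal

lemma exp_shift_integrable (a s : ℝ) (ha : 0 < a) :
    IntegrableOn (fun t : ℝ => Real.exp (-(a * (t - s)))) (Ioi s) := by
  have h := (exp_neg_integrableOn_Ioi s ha).const_mul (Real.exp (a * s))
  refine IntegrableOn.congr_fun h (fun t ht => ?_) measurableSet_Ioi
  rw [← Real.exp_add]; ring_nf

lemma exp_shift_integral (a s : ℝ) (ha : 0 < a) :
    ∫ t in Ioi s, Real.exp (-(a * (t - s))) = a⁻¹ := by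
  have hderiv : ∀ t ∈ Ici s, HasDerivAt (fun t : ℝ => -Real.exp (-(a * (t - s))) / a)
      (Real.exp (-(a * (t - s)))) t := by
    intro t _
    have h : HasDerivAt (fun t : ℝ => -(a * (t - s))) (-a) t := by
      have h0 := (((hasDerivAt_id t).sub_const s).const_mul a).neg
      simp only [id, mul_one] at h0
      exact h0
    have := (h.exp.neg.div_const a)
    have e : Real.exp (-(a * (t - s))) = -(Real.exp (-(a * (t - s))) * -a) / a := by
      rw [eq_div_iff ha.ne']; ring
    exact this.congr_deriv e.symm
  have htend : Filter.Tendsto (fun t : ℝ => -Real.exp (-(a * (t - s))) / a)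
      Filter.atTop (nhds 0) := by
    have h1 : Filter.Tendsto (fun t : ℝ => -(a * (t - s))) Filter.atTop Filter.atBot := by
      have h0 : Filter.Tendsto (fun t : ℝ => a * (t - s)) Filter.atTop Filter.atTop := by
        simpa [sub_eq_add_neg] using (Filter.tendsto_atTop_add_const_right Filter.atTop (-s)
          Filter.tendsto_id).const_mul_atTop ha
      simpa [Function.comp_def] using Filter.tendsto_neg_atTop_atBot.comp h0
    have h2 := Real.tendsto_exp_atBot.comp h1
    have := (h2.neg.div_const a)
    simpa using this
  have := integral_Ioi_of_hasDerivAt_of_tendsto' hderiv (exp_shift_integrable a s ha) htend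
  rw [this]; simp; ring

lemma exp_shift_lintegral (a s : ℝ) (ha : 0 < a) :
    ∫⁻ t in Ici s, ENNReal.ofReal (Real.exp (-(a * (t - s)))) = ENNReal.ofReal a⁻¹ := by
  rw [setLIntegral_congr (Filter.EventuallyEq.symm Ioi_ae_eq_Ici),
    ← ofReal_integral_eq_lintegral_ofReal (exp_shift_integrable a s ha)
      (Filter.Eventually.of_forall fun t => (Real.exp_pos _).le),
    exp_shift_integral a s ha]

lemma key_exp_bound (ν c s : ℝ) (hν : 0 < ν) (hc : 0 ≤ c) :
    ENNReal.ofReal ν * ENNReal.ofReal c *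
      ∫⁻ t in Ici s, ENNReal.ofReal (Real.exp (-ν * (t - s) * c ^ 2)) ≤
    (ENNReal.ofReal c)⁻¹ := by
  rcases eq_or_lt_of_le hc with rfl | hc
  · simp
  · have ha : 0 < ν * c ^ 2 := by positivity
    have hrw : ∀ t : ℝ, ENNReal.ofReal (Real.exp (-ν * (t - s) * c ^ 2)) =
        ENNReal.ofReal (Real.exp (-((ν * c ^ 2) * (t - s)))) := by
      intro t; congr 1; ring_nf
    rw [lintegral_congr hrw, exp_shift_lintegral _ _ ha,
      ← ENNReal.ofReal_mul hν.le, ← ENNReal.ofReal_mul (by positivity)]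
    rw [← ENNReal.ofReal_inv_of_pos hc]
    apply ENNReal.ofReal_le_ofReal
    have : ν * c * (ν * c ^ 2)⁻¹ = c⁻¹ := by field_simp
    rw [this]

/-- Lemma 3.1, estimate (3.7): for
`V(t,ξ) = e^{−νt|ξ|²} V₀(ξ) + ∫₀ᵗ e^{−ν(t−s)|ξ|²} f(s,ξ) ds` (Duhamel's formula
in Fourier variables) with `V₀ ∈ χ^{−1}` and `f ∈ L¹([0,T];χ^{−1})`, for every
`t₀ ∈ [0,T]`:
`‖V‖_{L^∞([0,t₀];χ^{−1})} + ν‖V‖_{L¹([0,t₀];χ¹)}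
    ≤ 2(‖V₀‖_{χ^{−1}} + ‖f‖_{L¹([0,t₀];χ^{−1})})`. -/
theorem stmt_9 (ν T : ℝ) (hν : 0 < ν) (hT : 0 < T)
    (V₀ : EuclideanSpace ℝ (Fin 3) → ℂ) (f : ℝ → EuclideanSpace ℝ (Fin 3) → ℂ)
    (hV₀ : Measurable V₀) (hf : Measurable (Function.uncurry f))
    (hV₀int : (∫⁻ ξ, (ENNReal.ofReal ‖ξ‖)⁻¹ * ‖V₀ ξ‖₊) ≠ ⊤)
    (hfint : (∫⁻ s in Set.Icc (0 : ℝ) T, ∫⁻ ξ, (ENNReal.ofReal ‖ξ‖)⁻¹ * ‖f s ξ‖₊) ≠ ⊤)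
    (V : ℝ → EuclideanSpace ℝ (Fin 3) → ℂ)
    (hV : ∀ t ξ, V t ξ = Real.exp (-ν * t * ‖ξ‖ ^ 2) • V₀ ξ +
        ∫ s in Set.Icc (0 : ℝ) t, Real.exp (-ν * (t - s) * ‖ξ‖ ^ 2) • f s ξ) :
    ∀ t₀ ∈ Set.Icc (0 : ℝ) T,
      (⨆ t ∈ Set.Icc (0 : ℝ) t₀, ∫⁻ ξ, (ENNReal.ofReal ‖ξ‖)⁻¹ * ‖V t ξ‖₊) +
          ENNReal.ofReal ν *
            ∫⁻ t in Set.Icc (0 : ℝ) t₀, ∫⁻ ξ, ENNReal.ofReal ‖ξ‖ * ‖V t ξ‖₊ ≤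
        2 * ((∫⁻ ξ, (ENNReal.ofReal ‖ξ‖)⁻¹ * ‖V₀ ξ‖₊) +
          ∫⁻ s in Set.Icc (0 : ℝ) t₀, ∫⁻ ξ, (ENNReal.ofReal ‖ξ‖)⁻¹ * ‖f s ξ‖₊) := by
  rintro t₀ ⟨ht₀0, ht₀T⟩
  set I : Set ℝ := Set.Icc (0 : ℝ) t₀ with hIdef
  set X : ℝ≥0∞ := (∫⁻ ξ, (ENNReal.ofReal ‖ξ‖)⁻¹ * ‖V₀ ξ‖₊) +
      ∫⁻ s in I, ∫⁻ ξ, (ENNReal.ofReal ‖ξ‖)⁻¹ * ‖f s ξ‖₊ with hXdef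
  -- measurability facts
  have mw : Measurable (fun ξ : EuclideanSpace ℝ (Fin 3) => ENNReal.ofReal ‖ξ‖) :=
    measurable_norm.ennreal_ofReal
  -- the pointwise domination
  have hG : ∀ t ∈ I, ∀ ξ, (‖V t ξ‖₊ : ℝ≥0∞) ≤
      ENNReal.ofReal (Real.exp (-ν * t * ‖ξ‖ ^ 2)) * ‖V₀ ξ‖₊ +
      ∫⁻ s in I, (if s ≤ t then (1 : ℝ≥0∞) else 0) *
        (ENNReal.ofReal (Real.exp (-ν * (t - s) * ‖ξ‖ ^ 2)) * ‖f s ξ‖₊) := by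
    intro t ht ξ
    rw [hV t ξ]
    have h0 : (‖Real.exp (-ν * t * ‖ξ‖ ^ 2) • V₀ ξ‖₊ : ℝ≥0∞) =
        ENNReal.ofReal (Real.exp (-ν * t * ‖ξ‖ ^ 2)) * ‖V₀ ξ‖₊ := by
      rw [nnnorm_smul]
      push_cast
      rw [← enorm_eq_nnnorm, Real.enorm_eq_ofReal (Real.exp_nonneg _)]
    have h2 : (‖∫ s in Set.Icc (0 : ℝ) t, Real.exp (-ν * (t - s) * ‖ξ‖ ^ 2) • f s ξ‖₊ : ℝ≥0∞) ≤
        ∫⁻ s in I, (if s ≤ t then (1 : ℝ≥0∞) else 0) *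
          (ENNReal.ofReal (Real.exp (-ν * (t - s) * ‖ξ‖ ^ 2)) * ‖f s ξ‖₊) := by
      refine le_trans (enorm_integral_le_lintegral_enorm _) ?_
      simp only [enorm_eq_nnnorm]
      have h1 : ∀ᵐ s ∂(volume : Measure ℝ), s ∈ Set.Icc (0 : ℝ) t →
          (‖Real.exp (-ν * (t - s) * ‖ξ‖ ^ 2) • f s ξ‖₊ : ℝ≥0∞) =
          (if s ≤ t then (1 : ℝ≥0∞) else 0) *
            (ENNReal.ofReal (Real.exp (-ν * (t - s) * ‖ξ‖ ^ 2)) * ‖f s ξ‖₊) := by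
        refine Filter.Eventually.of_forall fun s hs => ?_
        rw [if_pos hs.2, one_mul, nnnorm_smul]
        push_cast
        rw [← enorm_eq_nnnorm, Real.enorm_eq_ofReal (Real.exp_nonneg _)]
      rw [setLIntegral_congr_fun_ae measurableSet_Icc h1]
      exact lintegral_mono_set (Set.Icc_subset_Icc le_rfl ht.2)
    calc (‖Real.exp (-ν * t * ‖ξ‖ ^ 2) • V₀ ξ +
          ∫ s in Set.Icc (0 : ℝ) t, Real.exp (-ν * (t - s) * ‖ξ‖ ^ 2) • f s ξ‖₊ : ℝ≥0∞)
        ≤ (‖Real.exp (-ν * t * ‖ξ‖ ^ 2) • V₀ ξ‖₊ : ℝ≥0∞) +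
          (‖∫ s in Set.Icc (0 : ℝ) t, Real.exp (-ν * (t - s) * ‖ξ‖ ^ 2) • f s ξ‖₊ : ℝ≥0∞) := by
          exact_mod_cast nnnorm_add_le _ _
      _ ≤ _ := by rw [h0]; exact add_le_add le_rfl h2
  -- the L^infty χ^{-1} estimate
  have hA : ∀ t ∈ I, (∫⁻ ξ, (ENNReal.ofReal ‖ξ‖)⁻¹ * ‖V t ξ‖₊) ≤ X := by
    intro t ht
    have step1 : (∫⁻ ξ, (ENNReal.ofReal ‖ξ‖)⁻¹ * ‖V t ξ‖₊) ≤
        ∫⁻ ξ, ((ENNReal.ofReal ‖ξ‖)⁻¹ * ‖V₀ ξ‖₊ +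
          ∫⁻ s in I, (ENNReal.ofReal ‖ξ‖)⁻¹ * ‖f s ξ‖₊) := by
      refine lintegral_mono fun ξ => ?_
      refine le_trans (mul_le_mul_right (hG t ht ξ) _) ?_
      rw [mul_add]
      refine add_le_add ?_ ?_
      · refine mul_le_mul_right ?_ _
        calc ENNReal.ofReal (Real.exp (-ν * t * ‖ξ‖ ^ 2)) * ‖V₀ ξ‖₊
            ≤ 1 * ‖V₀ ξ‖₊ := by
              refine mul_le_mul_left ?_ _
              refine ENNReal.ofReal_le_one.mpr (Real.exp_le_one_iff.mpr ?_)
              nlinarith [mul_nonneg (mul_nonneg hν.le ht.1) (sq_nonneg ‖ξ‖)]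
          _ = ‖V₀ ξ‖₊ := one_mul _
      · refine le_trans (lintegral_const_mul_le _ _) (lintegral_mono fun s => ?_)
        refine mul_le_mul_right ?_ _
        by_cases hst : s ≤ t
        · rw [if_pos hst, one_mul]
          calc ENNReal.ofReal (Real.exp (-ν * (t - s) * ‖ξ‖ ^ 2)) * ‖f s ξ‖₊
              ≤ 1 * ‖f s ξ‖₊ := by
                refine mul_le_mul_left ?_ _
                refine ENNReal.ofReal_le_one.mpr (Real.exp_le_one_iff.mpr ?_)
                nlinarith [mul_nonneg (mul_nonneg hν.le (sub_nonneg.mpr hst)) (sq_nonneg ‖ξ‖)]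
            _ = ‖f s ξ‖₊ := one_mul _
        · rw [if_neg hst, zero_mul]; exact zero_le
    have step2 : (∫⁻ ξ, ((ENNReal.ofReal ‖ξ‖)⁻¹ * ‖V₀ ξ‖₊ +
          ∫⁻ s in I, (ENNReal.ofReal ‖ξ‖)⁻¹ * ‖f s ξ‖₊)) =
        (∫⁻ ξ, (ENNReal.ofReal ‖ξ‖)⁻¹ * ‖V₀ ξ‖₊) +
          ∫⁻ ξ, ∫⁻ s in I, (ENNReal.ofReal ‖ξ‖)⁻¹ * ‖f s ξ‖₊ :=
      lintegral_add_left (mw.inv.mul hV₀.enorm) _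
    have step3 : (∫⁻ ξ, ∫⁻ s in I, (ENNReal.ofReal ‖ξ‖)⁻¹ * ‖f s ξ‖₊) =
        ∫⁻ s in I, ∫⁻ ξ, (ENNReal.ofReal ‖ξ‖)⁻¹ * ‖f s ξ‖₊ := by
      refine lintegral_lintegral_swap ?_
      exact (((mw.comp measurable_fst).inv).mul
        ((hf.comp measurable_swap).enorm)).aemeasurable
    rw [hXdef]
    calc (∫⁻ ξ, (ENNReal.ofReal ‖ξ‖)⁻¹ * ‖V t ξ‖₊) ≤ _ := step1
      _ = _ := step2
      _ = _ := by rw [step3]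
  -- measurability for the dominating functions
  have ce1 : Continuous fun p : ℝ × EuclideanSpace ℝ (Fin 3) =>
      Real.exp (-ν * p.1 * ‖p.2‖ ^ 2) := by fun_prop
  have m1 : Measurable (fun p : ℝ × EuclideanSpace ℝ (Fin 3) =>
      ENNReal.ofReal ‖p.2‖ *
        (ENNReal.ofReal (Real.exp (-ν * p.1 * ‖p.2‖ ^ 2)) * ‖V₀ p.2‖₊)) :=
    (mw.comp measurable_snd).mul
      ((ce1.measurable.ennreal_ofReal).mul ((hV₀.comp measurable_snd).enorm))
  have ce2 : Continuous fun q : (ℝ × ℝ) × EuclideanSpace ℝ (Fin 3) =>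
      Real.exp (-ν * (q.1.1 - q.1.2) * ‖q.2‖ ^ 2) := by fun_prop
  have m2 : Measurable (fun q : (ℝ × ℝ) × EuclideanSpace ℝ (Fin 3) =>
      ENNReal.ofReal ‖q.2‖ * ((if q.1.2 ≤ q.1.1 then (1 : ℝ≥0∞) else 0) *
        (ENNReal.ofReal (Real.exp (-ν * (q.1.1 - q.1.2) * ‖q.2‖ ^ 2)) * ‖f q.1.2 q.2‖₊))) := by
    refine (mw.comp measurable_snd).mul (Measurable.mul (f := fun q : (ℝ × ℝ) × EuclideanSpace ℝ (Fin 3) => if q.1.2 ≤ q.1.1 then (1 : ℝ≥0∞) else 0) ?_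
      (Measurable.mul (f := fun q : (ℝ × ℝ) × EuclideanSpace ℝ (Fin 3) => ENNReal.ofReal (Real.exp (-ν * (q.1.1 - q.1.2) * ‖q.2‖ ^ 2))) ?_ ?_))
    · exact Measurable.ite (measurableSet_le measurable_fst.snd measurable_fst.fst)
        measurable_const measurable_const
    · exact ce2.measurable.ennreal_ofReal
    · exact (hf.comp (measurable_fst.snd.prodMk measurable_snd)).enorm
  -- key per-ξ bound for the initial-data term
  have hK1 : ∀ ξ : EuclideanSpace ℝ (Fin 3), ENNReal.ofReal ν *
      ∫⁻ t in I, ENNReal.ofReal ‖ξ‖ *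
        (ENNReal.ofReal (Real.exp (-ν * t * ‖ξ‖ ^ 2)) * ‖V₀ ξ‖₊) ≤
      (ENNReal.ofReal ‖ξ‖)⁻¹ * ‖V₀ ξ‖₊ := by
    intro ξ
    have hrw : ∀ t : ℝ, ENNReal.ofReal ‖ξ‖ *
        (ENNReal.ofReal (Real.exp (-ν * t * ‖ξ‖ ^ 2)) * ‖V₀ ξ‖₊) =
        (ENNReal.ofReal ‖ξ‖ * ‖V₀ ξ‖₊) *
          ENNReal.ofReal (Real.exp (-ν * t * ‖ξ‖ ^ 2)) := fun t => by ring
    rw [lintegral_congr hrw, lintegral_const_mul' _ _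
      (ENNReal.mul_ne_top ENNReal.ofReal_ne_top ENNReal.coe_ne_top)]
    have hJ : (∫⁻ t in I, ENNReal.ofReal (Real.exp (-ν * t * ‖ξ‖ ^ 2))) ≤
        ∫⁻ t in Ici (0 : ℝ), ENNReal.ofReal (Real.exp (-ν * (t - 0) * ‖ξ‖ ^ 2)) := by
      simp only [sub_zero]
      exact lintegral_mono_set Set.Icc_subset_Ici_self
    calc ENNReal.ofReal ν * ((ENNReal.ofReal ‖ξ‖ * ‖V₀ ξ‖₊) *
          ∫⁻ t in I, ENNReal.ofReal (Real.exp (-ν * t * ‖ξ‖ ^ 2)))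
        = (ENNReal.ofReal ν * ENNReal.ofReal ‖ξ‖ *
            ∫⁻ t in I, ENNReal.ofReal (Real.exp (-ν * t * ‖ξ‖ ^ 2))) * ‖V₀ ξ‖₊ := by ring
      _ ≤ (ENNReal.ofReal ν * ENNReal.ofReal ‖ξ‖ *
            ∫⁻ t in Ici (0 : ℝ), ENNReal.ofReal (Real.exp (-ν * (t - 0) * ‖ξ‖ ^ 2))) *
            ‖V₀ ξ‖₊ := mul_le_mul_left (mul_le_mul_right hJ _) _
      _ ≤ (ENNReal.ofReal ‖ξ‖)⁻¹ * ‖V₀ ξ‖₊ :=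
            mul_le_mul_left (key_exp_bound ν ‖ξ‖ 0 hν (norm_nonneg ξ)) _
  -- key per-(s,ξ) bound for the forcing term
  have hK2 : ∀ (s : ℝ) (ξ : EuclideanSpace ℝ (Fin 3)), ENNReal.ofReal ν *
      ∫⁻ t in I, ENNReal.ofReal ‖ξ‖ * ((if s ≤ t then (1 : ℝ≥0∞) else 0) *
        (ENNReal.ofReal (Real.exp (-ν * (t - s) * ‖ξ‖ ^ 2)) * ‖f s ξ‖₊)) ≤
      (ENNReal.ofReal ‖ξ‖)⁻¹ * ‖f s ξ‖₊ := by
    intro s ξ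
    have hrw : ∀ t : ℝ, ENNReal.ofReal ‖ξ‖ * ((if s ≤ t then (1 : ℝ≥0∞) else 0) *
        (ENNReal.ofReal (Real.exp (-ν * (t - s) * ‖ξ‖ ^ 2)) * ‖f s ξ‖₊)) =
        (ENNReal.ofReal ‖ξ‖ * ‖f s ξ‖₊) * ((if s ≤ t then (1 : ℝ≥0∞) else 0) *
          ENNReal.ofReal (Real.exp (-ν * (t - s) * ‖ξ‖ ^ 2))) := fun t => by ring
    rw [lintegral_congr hrw, lintegral_const_mul' _ _
      (ENNReal.mul_ne_top ENNReal.ofReal_ne_top ENNReal.coe_ne_top)]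
    have hJ : (∫⁻ t in I, (if s ≤ t then (1 : ℝ≥0∞) else 0) *
        ENNReal.ofReal (Real.exp (-ν * (t - s) * ‖ξ‖ ^ 2))) ≤
        ∫⁻ t in Ici s, ENNReal.ofReal (Real.exp (-ν * (t - s) * ‖ξ‖ ^ 2)) := by
      have hind : ∀ t : ℝ, (if s ≤ t then (1 : ℝ≥0∞) else 0) *
          ENNReal.ofReal (Real.exp (-ν * (t - s) * ‖ξ‖ ^ 2)) =
          (Ici s).indicator
            (fun t => ENNReal.ofReal (Real.exp (-ν * (t - s) * ‖ξ‖ ^ 2))) t := by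
        intro t; by_cases h : s ≤ t <;> simp [Set.indicator_apply, Set.mem_Ici, h]
      rw [lintegral_congr hind, lintegral_indicator measurableSet_Ici,
        Measure.restrict_restrict measurableSet_Ici]
      exact lintegral_mono_set Set.inter_subset_left
    calc ENNReal.ofReal ν * ((ENNReal.ofReal ‖ξ‖ * ‖f s ξ‖₊) *
          ∫⁻ t in I, (if s ≤ t then (1 : ℝ≥0∞) else 0) *
            ENNReal.ofReal (Real.exp (-ν * (t - s) * ‖ξ‖ ^ 2)))
        = (ENNReal.ofReal ν * ENNReal.ofReal ‖ξ‖ *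
            ∫⁻ t in I, (if s ≤ t then (1 : ℝ≥0∞) else 0) *
              ENNReal.ofReal (Real.exp (-ν * (t - s) * ‖ξ‖ ^ 2))) * ‖f s ξ‖₊ := by ring
      _ ≤ (ENNReal.ofReal ν * ENNReal.ofReal ‖ξ‖ *
            ∫⁻ t in Ici s, ENNReal.ofReal (Real.exp (-ν * (t - s) * ‖ξ‖ ^ 2))) * ‖f s ξ‖₊ :=
            mul_le_mul_left (mul_le_mul_right hJ _) _
      _ ≤ (ENNReal.ofReal ‖ξ‖)⁻¹ * ‖f s ξ‖₊ :=
            mul_le_mul_left (key_exp_bound ν ‖ξ‖ s hν (norm_nonneg ξ)) _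
  -- the two main dominated terms
  have hT1 : ENNReal.ofReal ν * (∫⁻ t in I, ∫⁻ ξ, ENNReal.ofReal ‖ξ‖ *
        (ENNReal.ofReal (Real.exp (-ν * t * ‖ξ‖ ^ 2)) * ‖V₀ ξ‖₊)) ≤
      ∫⁻ ξ, (ENNReal.ofReal ‖ξ‖)⁻¹ * ‖V₀ ξ‖₊ := by
    rw [lintegral_lintegral_swap m1.aemeasurable,
      ← lintegral_const_mul' _ _ ENNReal.ofReal_ne_top]
    exact lintegral_mono hK1
  have hT2 : ENNReal.ofReal ν * (∫⁻ t in I, ∫⁻ ξ, ∫⁻ s in I,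
        ENNReal.ofReal ‖ξ‖ * ((if s ≤ t then (1 : ℝ≥0∞) else 0) *
          (ENNReal.ofReal (Real.exp (-ν * (t - s) * ‖ξ‖ ^ 2)) * ‖f s ξ‖₊))) ≤
      ∫⁻ s in I, ∫⁻ ξ, (ENNReal.ofReal ‖ξ‖)⁻¹ * ‖f s ξ‖₊ := by
    have swA : ∀ t : ℝ, (∫⁻ ξ, ∫⁻ s in I,
        ENNReal.ofReal ‖ξ‖ * ((if s ≤ t then (1 : ℝ≥0∞) else 0) *
          (ENNReal.ofReal (Real.exp (-ν * (t - s) * ‖ξ‖ ^ 2)) * ‖f s ξ‖₊))) =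
        ∫⁻ s in I, ∫⁻ ξ, ENNReal.ofReal ‖ξ‖ * ((if s ≤ t then (1 : ℝ≥0∞) else 0) *
          (ENNReal.ofReal (Real.exp (-ν * (t - s) * ‖ξ‖ ^ 2)) * ‖f s ξ‖₊)) := by
      intro t
      exact lintegral_lintegral_swap
        ((m2.comp (((measurable_const.prodMk measurable_snd)).prodMk
          measurable_fst)).aemeasurable)
    have swB : (∫⁻ t in I, ∫⁻ s in I, ∫⁻ ξ,
        ENNReal.ofReal ‖ξ‖ * ((if s ≤ t then (1 : ℝ≥0∞) else 0) *
          (ENNReal.ofReal (Real.exp (-ν * (t - s) * ‖ξ‖ ^ 2)) * ‖f s ξ‖₊))) =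
        ∫⁻ s in I, ∫⁻ t in I, ∫⁻ ξ,
        ENNReal.ofReal ‖ξ‖ * ((if s ≤ t then (1 : ℝ≥0∞) else 0) *
          (ENNReal.ofReal (Real.exp (-ν * (t - s) * ‖ξ‖ ^ 2)) * ‖f s ξ‖₊)) :=
      lintegral_lintegral_swap (Measurable.lintegral_prod_right' m2).aemeasurable
    have swC : ∀ s : ℝ, (∫⁻ t in I, ∫⁻ ξ,
        ENNReal.ofReal ‖ξ‖ * ((if s ≤ t then (1 : ℝ≥0∞) else 0) *
          (ENNReal.ofReal (Real.exp (-ν * (t - s) * ‖ξ‖ ^ 2)) * ‖f s ξ‖₊))) =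
        ∫⁻ ξ, ∫⁻ t in I, ENNReal.ofReal ‖ξ‖ * ((if s ≤ t then (1 : ℝ≥0∞) else 0) *
          (ENNReal.ofReal (Real.exp (-ν * (t - s) * ‖ξ‖ ^ 2)) * ‖f s ξ‖₊)) := by
      intro s
      exact lintegral_lintegral_swap
        ((m2.comp ((measurable_fst.prodMk measurable_const).prodMk
          measurable_snd)).aemeasurable)
    rw [lintegral_congr fun t => swA t, swB, lintegral_congr fun s => swC s,
      ← lintegral_const_mul' _ _ ENNReal.ofReal_ne_top]
    refine lintegral_mono fun s => ?_
    rw [← lintegral_const_mul' _ _ ENNReal.ofReal_ne_top]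
    exact lintegral_mono fun ξ => hK2 s ξ
  -- assembling the L¹ χ¹ estimate
  have hB : ENNReal.ofReal ν *
      (∫⁻ t in I, ∫⁻ ξ, ENNReal.ofReal ‖ξ‖ * ‖V t ξ‖₊) ≤ X := by
    have split : (∫⁻ t in I, ∫⁻ ξ, ENNReal.ofReal ‖ξ‖ * ‖V t ξ‖₊) ≤
        (∫⁻ t in I, ∫⁻ ξ, ENNReal.ofReal ‖ξ‖ *
          (ENNReal.ofReal (Real.exp (-ν * t * ‖ξ‖ ^ 2)) * ‖V₀ ξ‖₊)) +
        ∫⁻ t in I, ∫⁻ ξ, ∫⁻ s in I,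
          ENNReal.ofReal ‖ξ‖ * ((if s ≤ t then (1 : ℝ≥0∞) else 0) *
            (ENNReal.ofReal (Real.exp (-ν * (t - s) * ‖ξ‖ ^ 2)) * ‖f s ξ‖₊)) := by
      have hstep : ∀ t ∈ I, (∫⁻ ξ, ENNReal.ofReal ‖ξ‖ * ‖V t ξ‖₊) ≤
          (∫⁻ ξ, ENNReal.ofReal ‖ξ‖ *
            (ENNReal.ofReal (Real.exp (-ν * t * ‖ξ‖ ^ 2)) * ‖V₀ ξ‖₊)) +
          ∫⁻ ξ, ∫⁻ s in I,
            ENNReal.ofReal ‖ξ‖ * ((if s ≤ t then (1 : ℝ≥0∞) else 0) *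
              (ENNReal.ofReal (Real.exp (-ν * (t - s) * ‖ξ‖ ^ 2)) * ‖f s ξ‖₊)) := by
        intro t ht
        have h1 : (∫⁻ ξ, ENNReal.ofReal ‖ξ‖ * ‖V t ξ‖₊) ≤
            ∫⁻ ξ, (ENNReal.ofReal ‖ξ‖ *
              (ENNReal.ofReal (Real.exp (-ν * t * ‖ξ‖ ^ 2)) * ‖V₀ ξ‖₊) +
            ∫⁻ s in I, ENNReal.ofReal ‖ξ‖ * ((if s ≤ t then (1 : ℝ≥0∞) else 0) *
              (ENNReal.ofReal (Real.exp (-ν * (t - s) * ‖ξ‖ ^ 2)) * ‖f s ξ‖₊))) := by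
          refine lintegral_mono fun ξ => ?_
          calc ENNReal.ofReal ‖ξ‖ * ‖V t ξ‖₊
              ≤ ENNReal.ofReal ‖ξ‖ *
                (ENNReal.ofReal (Real.exp (-ν * t * ‖ξ‖ ^ 2)) * ‖V₀ ξ‖₊ +
                ∫⁻ s in I, (if s ≤ t then (1 : ℝ≥0∞) else 0) *
                  (ENNReal.ofReal (Real.exp (-ν * (t - s) * ‖ξ‖ ^ 2)) * ‖f s ξ‖₊)) :=
                mul_le_mul_right (hG t ht ξ) _
            _ = ENNReal.ofReal ‖ξ‖ *
                  (ENNReal.ofReal (Real.exp (-ν * t * ‖ξ‖ ^ 2)) * ‖V₀ ξ‖₊) +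
                ENNReal.ofReal ‖ξ‖ *
                ∫⁻ s in I, (if s ≤ t then (1 : ℝ≥0∞) else 0) *
                  (ENNReal.ofReal (Real.exp (-ν * (t - s) * ‖ξ‖ ^ 2)) * ‖f s ξ‖₊) :=
                mul_add _ _ _
            _ = ENNReal.ofReal ‖ξ‖ *
                  (ENNReal.ofReal (Real.exp (-ν * t * ‖ξ‖ ^ 2)) * ‖V₀ ξ‖₊) +
                ∫⁻ s in I, ENNReal.ofReal ‖ξ‖ * ((if s ≤ t then (1 : ℝ≥0∞) else 0) *
                  (ENNReal.ofReal (Real.exp (-ν * (t - s) * ‖ξ‖ ^ 2)) * ‖f s ξ‖₊)) := by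
                rw [lintegral_const_mul' _ _ ENNReal.ofReal_ne_top]
        refine h1.trans (le_of_eq ?_)
        exact lintegral_add_left (m1.comp (measurable_prodMk_left)) _
      calc (∫⁻ t in I, ∫⁻ ξ, ENNReal.ofReal ‖ξ‖ * ‖V t ξ‖₊)
          ≤ ∫⁻ t in I, ((∫⁻ ξ, ENNReal.ofReal ‖ξ‖ *
              (ENNReal.ofReal (Real.exp (-ν * t * ‖ξ‖ ^ 2)) * ‖V₀ ξ‖₊)) +
            ∫⁻ ξ, ∫⁻ s in I,
              ENNReal.ofReal ‖ξ‖ * ((if s ≤ t then (1 : ℝ≥0∞) else 0) *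
                (ENNReal.ofReal (Real.exp (-ν * (t - s) * ‖ξ‖ ^ 2)) * ‖f s ξ‖₊))) :=
            setLIntegral_mono' measurableSet_Icc hstep
        _ = _ := lintegral_add_left (Measurable.lintegral_prod_right' m1) _
    calc ENNReal.ofReal ν * (∫⁻ t in I, ∫⁻ ξ, ENNReal.ofReal ‖ξ‖ * ‖V t ξ‖₊)
        ≤ ENNReal.ofReal ν * ((∫⁻ t in I, ∫⁻ ξ, ENNReal.ofReal ‖ξ‖ *
            (ENNReal.ofReal (Real.exp (-ν * t * ‖ξ‖ ^ 2)) * ‖V₀ ξ‖₊)) +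
          ∫⁻ t in I, ∫⁻ ξ, ∫⁻ s in I,
            ENNReal.ofReal ‖ξ‖ * ((if s ≤ t then (1 : ℝ≥0∞) else 0) *
              (ENNReal.ofReal (Real.exp (-ν * (t - s) * ‖ξ‖ ^ 2)) * ‖f s ξ‖₊))) :=
          mul_le_mul_right split _
      _ = ENNReal.ofReal ν * (∫⁻ t in I, ∫⁻ ξ, ENNReal.ofReal ‖ξ‖ *
            (ENNReal.ofReal (Real.exp (-ν * t * ‖ξ‖ ^ 2)) * ‖V₀ ξ‖₊)) +
          ENNReal.ofReal ν * ∫⁻ t in I, ∫⁻ ξ, ∫⁻ s in I,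
            ENNReal.ofReal ‖ξ‖ * ((if s ≤ t then (1 : ℝ≥0∞) else 0) *
              (ENNReal.ofReal (Real.exp (-ν * (t - s) * ‖ξ‖ ^ 2)) * ‖f s ξ‖₊)) :=
          mul_add _ _ _
      _ ≤ X := add_le_add hT1 hT2
  refine le_trans (add_le_add (iSup₂_le hA) hB) ?_
  rw [two_mul]
end

section
/- Define h : [0,∞) → [0,∞) by h(r) = 2^{(j+1)/2} for r ∈ [1 − 2^{−j}, 1 − 2^{−(j+1)}) for each integer j ≥ 0, and h(r) = 0 for r ≥ 1, and define g : ℝ³ → [0,∞) by g(ξ) = h(|ξ|)/|ξ| for ξ ≠ 0. Then ∫_{ℝ³} |ξ| g(ξ)² dξ = ∞. -/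
open MeasureTheory Metric Set ENNReal

private noncomputable def aR (j : ℕ) : ℝ := 1 - ((2:ℝ)^(j+1))⁻¹

private lemma aR_lt_one (j : ℕ) : aR j < 1 := by
  have : (0:ℝ) < ((2:ℝ)^(j+1))⁻¹ := by positivity
  simp only [aR]; linarith

private lemma aR_half (j : ℕ) : 1/2 ≤ aR j := by
  have h1 : ((2:ℝ)^(j+1))⁻¹ ≤ ((2:ℝ)^(0+1))⁻¹ := by
    apply inv_anti₀ (by positivity)
    exact pow_le_pow_right₀ (by norm_num) (by omega)
  simp only [aR]
  norm_num at h1 ⊢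
  linarith

private lemma aR_mono : StrictMono aR := by
  intro i j hij
  simp only [aR, sub_lt_sub_iff_left]
  apply inv_strictAnti₀ (by positivity)
  exact pow_lt_pow_right₀ (by norm_num) (by omega)

private lemma aR_succ_sub (j : ℕ) : aR (j+1) - aR j = ((2:ℝ)^(j+2))⁻¹ := by
  simp only [aR]
  have h2 : ((2:ℝ)^(j+1))⁻¹ = 2 * ((2:ℝ)^(j+2))⁻¹ := by
    rw [pow_succ]
    field_simp
    ring
  rw [h2]; ring

private lemma rpow_neg_cast (j : ℕ) : (2:ℝ) ^ (-((j:ℕ):ℝ)) = ((2:ℝ)^j)⁻¹ := by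
  rw [Real.rpow_neg (by norm_num), Real.rpow_natCast]

/-- The explicit example `f = 𝓕^{−1}(h(|ξ|)/|ξ|)` does not belong to
`Ḣ^{1/2}(ℝ³)`: with `h(r) = 2^{(j+1)/2}` on `[1 − 2^{−j}, 1 − 2^{−(j+1)})` for
each `j ≥ 0` and `h(r) = 0` for `r ≥ 1`, and `g(ξ) = h(|ξ|)/|ξ|`, one has
`∫ |ξ| g(ξ)² dξ = ∞`. -/
theorem stmt_12 (h : ℝ → ℝ)
    (hh : ∀ j : ℕ, ∀ r : ℝ,
      1 - (2 : ℝ) ^ (-(j : ℝ)) ≤ r → r < 1 - (2 : ℝ) ^ (-((j : ℝ) + 1)) →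
        h r = (2 : ℝ) ^ (((j : ℝ) + 1) / 2))
    (hh1 : ∀ r : ℝ, 1 ≤ r → h r = 0)
    (g : EuclideanSpace ℝ (Fin 3) → ℝ)
    (hg : ∀ ξ : EuclideanSpace ℝ (Fin 3), ξ ≠ 0 → g ξ = h ‖ξ‖ / ‖ξ‖) :
    (∫⁻ ξ, ENNReal.ofReal ‖ξ‖ * ENNReal.ofReal (g ξ) ^ 2) = ⊤ := by
  classical
  set F : EuclideanSpace ℝ (Fin 3) → ℝ≥0∞ := fun ξ => ENNReal.ofReal ‖ξ‖ * ENNReal.ofReal (g ξ) ^ 2 with hF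
  set S : ℕ → Set (EuclideanSpace ℝ (Fin 3)) := fun j => ball (0:EuclideanSpace ℝ (Fin 3)) (aR (j+1)) \ ball (0:EuclideanSpace ℝ (Fin 3)) (aR j) with hS
  have hmem : ∀ j, ∀ ξ : EuclideanSpace ℝ (Fin 3), ξ ∈ S j ↔ aR j ≤ ‖ξ‖ ∧ ‖ξ‖ < aR (j+1) := by
    intro j ξ
    simp [hS, mem_ball_zero_iff, not_lt, and_comm]
  -- h on the annulus
  have hval : ∀ j, ∀ ξ : EuclideanSpace ℝ (Fin 3), ξ ∈ S j → h ‖ξ‖ = (2:ℝ) ^ ((((j:ℝ)+1) + 1) / 2) := by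
    intro j ξ hξ
    rw [hmem] at hξ
    have := hh (j+1) ‖ξ‖ ?_ ?_
    · rw [this]; push_cast; ring_nf
    · rw [rpow_neg_cast]
      push_cast
      simpa [aR] using hξ.1
    · have : (2:ℝ) ^ (-(((j:ℕ)+1:ℕ):ℝ) + -1) = ((2:ℝ)^(j+2))⁻¹ := by
        rw [show (-(((j:ℕ)+1:ℕ):ℝ) + -1) = -(((j+2:ℕ):ℝ)) by push_cast; ring,
          rpow_neg_cast]
      push_cast at this ⊢
      rw [show -(((j:ℝ)+1) + 1) = -((j:ℝ)+1) + -1 by ring, this]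
      simpa [aR] using hξ.2
  -- pointwise lower bound on annulus
  have hpt : ∀ j, ∀ ξ : EuclideanSpace ℝ (Fin 3), ξ ∈ S j → ENNReal.ofReal ((2:ℝ)^(j+2)) ≤ F ξ := by
    intro j ξ hξ
    have hξ' := (hmem j ξ).1 hξ
    have hn0 : (0:ℝ) < ‖ξ‖ := lt_of_lt_of_le (by linarith [aR_half j]) hξ'.1
    have hξne : ξ ≠ 0 := by simpa [norm_pos_iff] using hn0
    have hn1 : ‖ξ‖ < 1 := lt_of_lt_of_le hξ'.2 (le_of_lt (aR_lt_one (j+1)))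
    have hgv : g ξ = (2:ℝ) ^ ((((j:ℝ)+1) + 1) / 2) / ‖ξ‖ := by
      rw [hg ξ hξne, hval j ξ hξ]
    have hsq : ((2:ℝ) ^ ((((j:ℝ)+1) + 1) / 2))^2 = (2:ℝ)^(j+2) := by
      rw [← Real.rpow_natCast ((2:ℝ) ^ ((((j:ℝ)+1) + 1) / 2)) 2,
        ← Real.rpow_mul (by norm_num)]
      rw [show ((((j:ℝ)+1) + 1) / 2) * (2:ℕ) = ((j+2:ℕ):ℝ) by push_cast; ring]
      rw [Real.rpow_natCast]
    have hgpos : 0 ≤ g ξ := by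
      rw [hgv]; positivity
    have : F ξ = ENNReal.ofReal (‖ξ‖ * (g ξ)^2) := by
      rw [hF, ENNReal.ofReal_mul (norm_nonneg _), ENNReal.ofReal_pow hgpos]
    rw [this]
    apply ENNReal.ofReal_le_ofReal
    rw [hgv, div_pow, hsq]
    have h1 : ‖ξ‖ * ((2:ℝ)^(j+2) / ‖ξ‖^2) = (2:ℝ)^(j+2) / ‖ξ‖ := by
      field_simp
    rw [h1, le_div_iff₀ hn0]
    nlinarith [pow_pos (show (0:ℝ) < 2 by norm_num) (j+2)]
  -- measure of annulus
  have hSm : ∀ j, MeasurableSet (S j) :=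
    fun j => (measurableSet_ball).diff measurableSet_ball
  have hvol : ∀ j, ENNReal.ofReal (((2:ℝ)^(j+2))⁻¹ / 4) * volume (ball (0:EuclideanSpace ℝ (Fin 3)) 1)
      ≤ volume (S j) := by
    intro j
    have hsub : ball (0:EuclideanSpace ℝ (Fin 3)) (aR j) ⊆ ball (0:EuclideanSpace ℝ (Fin 3)) (aR (j+1)) :=
      ball_subset_ball (le_of_lt (aR_mono (Nat.lt_succ_self j)))
    have hfin : volume (ball (0:EuclideanSpace ℝ (Fin 3)) (aR j)) ≠ ⊤ := measure_ball_lt_top.ne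
    rw [hS]
    rw [measure_diff hsub measurableSet_ball.nullMeasurableSet hfin]
    have h0j : (0:ℝ) ≤ aR j := by linarith [aR_half j]
    have h0j1 : (0:ℝ) ≤ aR (j+1) := by linarith [aR_half (j+1)]
    rw [Measure.addHaar_ball _ _ h0j, Measure.addHaar_ball _ _ h0j1]
    rw [← ENNReal.sub_mul (by intro _ _; exact measure_ball_lt_top.ne)]
    apply mul_le_mul_left _ _
    rw [← ENNReal.ofReal_sub _ (by positivity)]
    apply ENNReal.ofReal_le_ofReal
    have hfr : Module.finrank ℝ (EuclideanSpace ℝ (Fin 3)) = 3 := by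
      simp [finrank_euclideanSpace]
    rw [hfr]
    have hd := aR_succ_sub j
    have hh2 : (1:ℝ)/2 ≤ aR j := aR_half j
    have hlt : aR j < aR (j+1) := aR_mono (Nat.lt_succ_self j)
    have h3 : aR (j+1)^3 - aR j^3
        = (aR (j+1) - aR j) * (aR (j+1)^2 + aR (j+1)*aR j + aR j^2) := by ring
    have h4 : (1:ℝ)/4 ≤ aR (j+1)^2 + aR (j+1)*aR j + aR j^2 := by
      nlinarith [aR_half j, aR_half (j+1)]
    rw [h3, ← hd]
    have h5 := mul_le_mul_of_nonneg_left h4 (by linarith : (0:ℝ) ≤ aR (j+1) - aR j)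
    linarith
  -- per-annulus lower bound
  set c : ℝ≥0∞ := ENNReal.ofReal (1/4) * volume (ball (0:EuclideanSpace ℝ (Fin 3)) 1) with hc
  have hkey : ∀ j, c ≤ ∫⁻ ξ in S j, F ξ := by
    intro j
    calc c ≤ ENNReal.ofReal ((2:ℝ)^(j+2)) * volume (S j) := by
            calc c ≤ ENNReal.ofReal ((2:ℝ)^(j+2)) *
                (ENNReal.ofReal (((2:ℝ)^(j+2))⁻¹ / 4) * volume (ball (0:EuclideanSpace ℝ (Fin 3)) 1)) := by
                  rw [← mul_assoc, ← ENNReal.ofReal_mul (by positivity)]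
                  apply mul_le_mul_left (ENNReal.ofReal_le_ofReal _)
                  apply le_of_eq
                  field_simp
              _ ≤ ENNReal.ofReal ((2:ℝ)^(j+2)) * volume (S j) :=
                  mul_le_mul_right (hvol j) _
      _ ≤ ∫⁻ ξ in S j, F ξ := by
          refine le_trans (le_of_eq (setLIntegral_const (S j)
            (ENNReal.ofReal ((2:ℝ)^(j+2)))).symm) ?_
          apply lintegral_mono_ae
          filter_upwards [ae_restrict_mem (hSm j)] with ξ hξ
          exact hpt j ξ hξ
  -- disjointness
  have hdisj : Pairwise (Function.onFun Disjoint S) := by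
    intro i j hij
    wlog hlt : i < j generalizing i j
    · exact (this hij.symm (by omega)).symm
    rw [Function.onFun, Set.disjoint_left]
    intro ξ hi hj
    rw [hmem] at hi hj
    have : aR (i+1) ≤ aR j := aR_mono.le_iff_le.mpr (by omega)
    linarith [hi.2, hj.1]
  -- conclude
  have hc0 : c ≠ 0 := by
    rw [hc]
    apply mul_ne_zero
    · simp [ENNReal.ofReal_eq_zero]
    · exact (measure_ball_pos volume 0 one_pos).ne'
  have htop : (∑' j : ℕ, ∫⁻ ξ in S j, F ξ) = ⊤ := by
    apply eq_top_iff.mpr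
    calc (⊤:ℝ≥0∞) = ∑' _ : ℕ, c := (ENNReal.tsum_const_eq_top_of_ne_zero hc0).symm
      _ ≤ ∑' j : ℕ, ∫⁻ ξ in S j, F ξ := ENNReal.tsum_le_tsum hkey
  have hle : (∑' j : ℕ, ∫⁻ ξ in S j, F ξ) ≤ ∫⁻ ξ, F ξ := by
    rw [← lintegral_iUnion hSm hdisj]
    exact setLIntegral_le_lintegral _ _
  exact eq_top_iff.mpr (htop ▸ hle)
end

section
/- Let ν > 0 and T* ∈ (0,∞]. Let X : [0,T*) → [0,∞) be continuous and Y : [0,T*) → [0,∞) be monotone nondecreasing with Y(0) = 0, and suppose that for every t ∈ [0,T*): X(t) + ν Y(t) ≤ X(0) + ( sup_{0 ≤ s ≤ t} X(s) ) · Y(t). If X(0) < ν, then for every t ∈ [0,T*): X(t) ≤ X(0) and X(t) + (ν − X(0)) Y(t) ≤ X(0). -/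
open MeasureTheory

/-- The continuity (bootstrap) argument: if `X` is continuous and nonnegative on
`[0,T*)` (with `T* ∈ (0,∞]`, encoded as `Tstar : ℝ≥0∞`), `Y` is nonnegative,
nondecreasing with `Y(0) = 0`, and
`X(t) + ν Y(t) ≤ X(0) + (sup_{0≤s≤t} X(s)) Y(t)` for all `t ∈ [0,T*)`, then
`X(0) < ν` implies `X(t) ≤ X(0)` and `X(t) + (ν − X(0)) Y(t) ≤ X(0)` for all
`t ∈ [0,T*)`. -/
theorem stmt_13 (ν : ℝ) (hν : 0 < ν) (Tstar : ENNReal) (hTstar : 0 < Tstar)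
    (X Y : ℝ → ℝ)
    (hXcont : ContinuousOn X {t : ℝ | 0 ≤ t ∧ ENNReal.ofReal t < Tstar})
    (hXnn : ∀ t : ℝ, 0 ≤ t → ENNReal.ofReal t < Tstar → 0 ≤ X t)
    (hYnn : ∀ t : ℝ, 0 ≤ t → ENNReal.ofReal t < Tstar → 0 ≤ Y t)
    (hYmono : ∀ s t : ℝ, 0 ≤ s → s ≤ t → ENNReal.ofReal t < Tstar → Y s ≤ Y t)
    (hY0 : Y 0 = 0)
    (hineq : ∀ t : ℝ, 0 ≤ t → ENNReal.ofReal t < Tstar →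
      X t + ν * Y t ≤ X 0 + sSup (X '' Set.Icc 0 t) * Y t)
    (h0 : X 0 < ν) :
    ∀ t : ℝ, 0 ≤ t → ENNReal.ofReal t < Tstar →
      X t ≤ X 0 ∧ X t + (ν - X 0) * Y t ≤ X 0 := by
  intro t ht htT
  have hsubT : ∀ s ∈ Set.Icc (0:ℝ) t, ENNReal.ofReal s < Tstar := fun s hs =>
    lt_of_le_of_lt (ENNReal.ofReal_le_ofReal hs.2) htT
  set c := (X 0 + ν) / 2 with hc
  have hX00 : 0 ≤ X 0 := hXnn 0 le_rfl (by simpa using hTstar)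
  have hX0c : X 0 < c := by simp only [hc]; linarith
  have hcν : c < ν := by simp only [hc]; linarith
  -- key bootstrap step
  have key : ∀ s ∈ Set.Icc (0:ℝ) t, (∀ r ∈ Set.Icc (0:ℝ) s, X r ≤ c) → X s ≤ X 0 := by
    intro s hs hr
    have hM : sSup (X '' Set.Icc 0 s) ≤ c :=
      csSup_le (Set.Nonempty.image X (Set.nonempty_Icc.2 hs.1))
        (by rintro _ ⟨r, hrm, rfl⟩; exact hr r hrm)
    have h1 := hineq s hs.1 (hsubT s hs)
    have hYs : 0 ≤ Y s := hYnn s hs.1 (hsubT s hs)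
    nlinarith [mul_le_mul_of_nonneg_right hM hYs]
  set S : Set ℝ := {s | s ∈ Set.Icc (0:ℝ) t ∧ ∀ r ∈ Set.Icc (0:ℝ) s, X r ≤ c} with hS
  have hmem0 : (0:ℝ) ∈ S := by
    refine ⟨⟨le_rfl, ht⟩, fun r hr => ?_⟩
    have : r = 0 := le_antisymm hr.2 hr.1
    rw [this]; exact le_of_lt hX0c
  have hbdd : BddAbove S := ⟨t, fun s hs => hs.1.2⟩
  have hne : S.Nonempty := ⟨0, hmem0⟩
  set m := sSup S with hmdef
  have hm0 : 0 ≤ m := le_csSup hbdd hmem0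
  have hmt : m ≤ t := csSup_le hne (fun s hs => hs.1.2)
  have hmD : m ∈ {t : ℝ | 0 ≤ t ∧ ENNReal.ofReal t < Tstar} := ⟨hm0, hsubT m ⟨hm0, hmt⟩⟩
  have hlt : ∀ r, 0 ≤ r → r < m → X r ≤ X 0 := by
    intro r hr0 hrm
    obtain ⟨s, hsS, hrs⟩ := exists_lt_of_lt_csSup hne hrm
    have hrs' : r ≤ s := le_of_lt hrs
    exact key r ⟨hr0, le_trans hrs' hsS.1.2⟩
      (fun q hq => hsS.2 q ⟨hq.1, le_trans hq.2 hrs'⟩)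
  have hXm : X m ≤ X 0 := by
    rcases eq_or_lt_of_le hm0 with h | h
    · rw [← h]
    · have hcont : ContinuousWithinAt X {t : ℝ | 0 ≤ t ∧ ENNReal.ofReal t < Tstar} m :=
        hXcont m hmD
      have hsub : Set.Ioo (0:ℝ) m ⊆ {t : ℝ | 0 ≤ t ∧ ENNReal.ofReal t < Tstar} :=
        fun r hr => ⟨le_of_lt hr.1, hsubT r ⟨le_of_lt hr.1, le_trans (le_of_lt hr.2) hmt⟩⟩
      have htend : Filter.Tendsto X (nhdsWithin m (Set.Ioo 0 m)) (nhds (X m)) :=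
        hcont.mono hsub
      haveI : (nhdsWithin m (Set.Ioo 0 m)).NeBot := right_nhdsWithin_Ioo_neBot h
      exact le_of_tendsto htend
        (Filter.eventually_iff_exists_mem.2 ⟨Set.Ioo 0 m, self_mem_nhdsWithin,
          fun r hr => hlt r (le_of_lt hr.1) hr.2⟩)
  have hmS : m ∈ S := by
    refine ⟨⟨hm0, hmt⟩, fun r hr => ?_⟩
    rcases eq_or_lt_of_le hr.2 with h | h
    · rw [h]; exact le_trans hXm (le_of_lt hX0c)
    · exact le_trans (hlt r hr.1 h) (le_of_lt hX0c)
  have hmeqt : m = t := by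
    by_contra hne'
    have hmlt : m < t := lt_of_le_of_ne hmt hne'
    have hcont : ContinuousWithinAt X {t : ℝ | 0 ≤ t ∧ ENNReal.ofReal t < Tstar} m :=
      hXcont m hmD
    have hε : (0:ℝ) < c - X 0 := by linarith
    obtain ⟨δ, hδ, hδ'⟩ := Metric.continuousWithinAt_iff.1 hcont (c - X 0) hε
    set m' := min (m + δ / 2) t with hm'
    have hmm' : m < m' := lt_min (by linarith) hmlt
    have hm'S : m' ∈ S := by
      refine ⟨⟨le_trans hm0 (le_of_lt hmm'), min_le_right _ _⟩, fun r hr => ?_⟩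
      rcases le_or_gt r m with h | h
      · exact hmS.2 r ⟨hr.1, h⟩
      · have hrt : r ≤ t := le_trans hr.2 (min_le_right _ _)
        have hrD : r ∈ {t : ℝ | 0 ≤ t ∧ ENNReal.ofReal t < Tstar} :=
          ⟨hr.1, hsubT r ⟨hr.1, hrt⟩⟩
        have hdist : dist r m < δ := by
          rw [Real.dist_eq, abs_of_pos (by linarith)]
          have : r ≤ m + δ / 2 := le_trans hr.2 (min_le_left _ _)
          linarith
        have := hδ' hrD hdist
        rw [Real.dist_eq] at this
        have := abs_lt.1 this
        linarith [hXm, this.2]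
    have : m' ≤ m := le_csSup hbdd hm'S
    linarith
  have hall : ∀ r ∈ Set.Icc (0:ℝ) t, X r ≤ X 0 := by
    intro r hr
    exact key r hr (fun q hq => (hmeqt ▸ hmS).2 q ⟨hq.1, le_trans hq.2 hr.2⟩)
  have hM : sSup (X '' Set.Icc 0 t) ≤ X 0 :=
    csSup_le (Set.Nonempty.image X (Set.nonempty_Icc.2 ht))
      (by rintro _ ⟨r, hrm, rfl⟩; exact hall r hrm)
  have h1 := hineq t ht htT
  have hYt : 0 ≤ Y t := hYnn t ht htT
  constructor <;> nlinarith [mul_le_mul_of_nonneg_right hM hYt]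
end

section
/- Let ν > 0 and T* ∈ (0,∞]. Let u : [0,T*) × ℝ³ → [0,∞) be measurable such that X(t) = ∫_{ℝ³} |ξ|⁻¹ u(t,ξ) dξ is continuous in t, Y(t) = ∫₀ᵗ ∫_{ℝ³} |ξ| u(s,ξ) dξ ds is finite for every t < T*, and for every t ∈ [0,T*): X(t) + ν Y(t) ≤ X(0) + ∫₀ᵗ ( ∫_{ℝ³} u(s,ξ) dξ )² ds, together with ∫₀ᵗ ( ∫_{ℝ³} u(s,ξ) dξ )² ds ≤ ( sup_{0≤s≤t} X(s) ) Y(t). If X(0) < ν, then ∫₀^{T*} ( ∫_{ℝ³} u(t,ξ) dξ )² dt ≤ X(0)² / (ν − X(0)). -/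
open MeasureTheory Filter Set

/-- The global a priori bound: if `X(t) = ‖u(t)‖_{χ^{−1}}` is continuous on
`[0,T*)`, `Y(t) = ∫₀ᵗ ‖u(s)‖_{χ¹} ds` is finite on `[0,T*)`, and on `[0,T*)`
`X(t) + ν Y(t) ≤ X(0) + ∫₀ᵗ ‖u(s)‖²_{χ⁰} ds` together with
`∫₀ᵗ ‖u(s)‖²_{χ⁰} ds ≤ (sup_{0≤s≤t} X(s)) Y(t)`, then `X(0) < ν` implies
`∫₀^{T*} ‖u(t)‖²_{χ⁰} dt ≤ X(0)² / (ν − X(0))`. -/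
theorem stmt_14 (ν : ℝ) (hν : 0 < ν) (Tstar : ENNReal) (hTstar : 0 < Tstar)
    (u : ℝ → EuclideanSpace ℝ (Fin 3) → ENNReal)
    (hu : Measurable (Function.uncurry u))
    (X Y Z : ℝ → ENNReal)
    (hX : ∀ t : ℝ, X t = ∫⁻ ξ, (ENNReal.ofReal ‖ξ‖)⁻¹ * u t ξ)
    (hY : ∀ t : ℝ, Y t = ∫⁻ s in Set.Icc (0 : ℝ) t, ∫⁻ ξ, ENNReal.ofReal ‖ξ‖ * u s ξ)
    (hZ : ∀ t : ℝ, Z t = ∫⁻ s in Set.Icc (0 : ℝ) t, (∫⁻ ξ, u s ξ) ^ 2)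
    (hXcont : ContinuousOn X {t : ℝ | 0 ≤ t ∧ ENNReal.ofReal t < Tstar})
    (hYfin : ∀ t : ℝ, 0 ≤ t → ENNReal.ofReal t < Tstar → Y t ≠ ⊤)
    (hineq1 : ∀ t : ℝ, 0 ≤ t → ENNReal.ofReal t < Tstar →
      X t + ENNReal.ofReal ν * Y t ≤ X 0 + Z t)
    (hineq2 : ∀ t : ℝ, 0 ≤ t → ENNReal.ofReal t < Tstar →
      Z t ≤ (⨆ s ∈ Set.Icc (0 : ℝ) t, X s) * Y t)
    (h0 : X 0 < ENNReal.ofReal ν) :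
    ∫⁻ t in {t : ℝ | 0 ≤ t ∧ ENNReal.ofReal t < Tstar}, (∫⁻ ξ, u t ξ) ^ 2 ≤
      X 0 ^ 2 / (ENNReal.ofReal ν - X 0) := by
  set D : Set ℝ := {t : ℝ | 0 ≤ t ∧ ENNReal.ofReal t < Tstar} with hD
  set ν' : ENNReal := ENNReal.ofReal ν with hν'
  set A : ENNReal := X 0 with hA
  have hν'top : ν' ≠ ⊤ := ENNReal.ofReal_ne_top
  have hAtop : A ≠ ⊤ := (h0.trans_le le_top).ne
  -- the midpoint constant c
  set a : ℝ := A.toReal with ha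
  have hAa : A = ENNReal.ofReal a := (ENNReal.ofReal_toReal hAtop).symm
  have ha0 : 0 ≤ a := ENNReal.toReal_nonneg
  have haν : a < ν := by
    have := h0
    rw [hAa] at this
    exact (ENNReal.ofReal_lt_ofReal_iff hν).mp this
  set c : ENNReal := ENNReal.ofReal ((a + ν) / 2) with hc
  have hAc : A < c := by
    rw [hAa, hc]
    exact (ENNReal.ofReal_lt_ofReal_iff (by linarith)).mpr (by linarith)
  have hcν : c ≤ ν' := by
    rw [hc, hν']
    exact ENNReal.ofReal_le_ofReal (by linarith)
  have hIccD : ∀ t ∈ D, Set.Icc (0:ℝ) t ⊆ D := by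
    intro t ht s hs
    exact ⟨hs.1, lt_of_le_of_lt (ENNReal.ofReal_le_ofReal hs.2) ht.2⟩
  have h0D : (0:ℝ) ∈ D := ⟨le_refl 0, by simpa using hTstar⟩
  -- step (⋆)
  have star : ∀ t ∈ D, (∀ s ∈ Set.Icc (0:ℝ) t, X s ≤ c) → X t ≤ A := by
    intro t ht hs
    have hsup : (⨆ s ∈ Set.Icc (0:ℝ) t, X s) ≤ c := by
      exact iSup₂_le hs
    have h2 : Z t ≤ c * Y t := (hineq2 t ht.1 ht.2).trans (mul_le_mul_left hsup _)
    have h1 : X t + ν' * Y t ≤ A + ν' * Y t := by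
      refine (hineq1 t ht.1 ht.2).trans ?_
      refine add_le_add le_rfl (h2.trans (mul_le_mul_left hcν _))
    exact (ENNReal.add_le_add_iff_right (ENNReal.mul_ne_top hν'top (hYfin t ht.1 ht.2))).mp h1
  -- main bootstrap: X ≤ A on D
  have hXA : ∀ t ∈ D, X t ≤ A := by
    intro t ht
    set S : Set ℝ := {s | s ∈ Set.Icc (0:ℝ) t ∧ ∀ r ∈ Set.Icc (0:ℝ) s, X r ≤ c} with hSdef
    have hS0 : (0:ℝ) ∈ S := by
      refine ⟨⟨le_refl 0, ht.1⟩, fun r hr => ?_⟩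
      have : r = 0 := le_antisymm hr.2 hr.1
      rw [this]; exact hAc.le
    have hSbdd : BddAbove S := ⟨t, fun s hsS => hsS.1.2⟩
    set b : ℝ := sSup S with hb
    have hb0 : 0 ≤ b := le_csSup hSbdd hS0
    have hbt : b ≤ t := csSup_le ⟨0, hS0⟩ fun s hsS => hsS.1.2
    have hbD : b ∈ D := hIccD t ht ⟨hb0, hbt⟩
    have hlt : ∀ r, 0 ≤ r → r < b → X r ≤ c := by
      intro r hr0 hrb
      obtain ⟨s, hsS, hrs⟩ := exists_lt_of_lt_csSup ⟨0, hS0⟩ hrb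
      exact hsS.2 r ⟨hr0, hrs.le⟩
    have hbS : b ∈ S := by
      refine ⟨⟨hb0, hbt⟩, fun r hr => ?_⟩
      rcases hr.2.lt_or_eq with hrb | hrb
      · exact hlt r hr.1 hrb
      · rw [hrb]
        rcases hb0.lt_or_eq with hb0' | hb0'
        · -- continuity from the left
          have hIco : Set.Ico (0:ℝ) b ⊆ D := fun s hs => hIccD t ht ⟨hs.1, hs.2.le.trans hbt⟩
          have hcont : Filter.Tendsto X (nhdsWithin b (Set.Ico (0:ℝ) b)) (nhds (X b)) :=
            (hXcont b hbD).mono_left (nhdsWithin_mono b hIco)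
          have hne : (nhdsWithin b (Set.Ico (0:ℝ) b)).NeBot := by
            rw [← mem_closure_iff_nhdsWithin_neBot, closure_Ico hb0'.ne]
            exact Set.right_mem_Icc.mpr hb0'.le
          refine le_of_tendsto hcont ?_
          exact eventually_of_mem self_mem_nhdsWithin fun s hs => hlt s hs.1 hs.2
        · rw [← hb0']; exact hAc.le
    have hbtop : b = t := by
      by_contra hne
      have hblt : b < t := lt_of_le_of_ne hbt hne
      have hXb : X b < c := lt_of_le_of_lt (star b hbD hbS.2) hAc
      have hev : ∀ᶠ s in nhdsWithin b D, X s < c :=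
        (hXcont b hbD).eventually (Filter.Tendsto.eventually_lt_const hXb tendsto_id)
      obtain ⟨ε, hε, hball⟩ := Metric.mem_nhdsWithin_iff.mp hev
      set b' : ℝ := min t (b + ε / 2) with hb'
      have hbb' : b < b' := lt_min hblt (by linarith)
      have hb'S : b' ∈ S := by
        refine ⟨⟨hb0.trans hbb'.le, min_le_left _ _⟩, fun r hr => ?_⟩
        rcases le_or_gt r b with hrb | hrb
        · exact hbS.2 r ⟨hr.1, hrb⟩
        · have hrD : r ∈ D := hIccD t ht ⟨hr.1, hr.2.trans (min_le_left _ _)⟩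
          have hrball : r ∈ Metric.ball b ε := by
            rw [Real.ball_eq_Ioo]
            constructor
            · linarith
            · have : r ≤ b + ε / 2 := hr.2.trans (min_le_right _ _)
              linarith
          exact (hball ⟨hrball, hrD⟩).le
      exact absurd (le_csSup hSbdd hb'S) (not_le.mpr hbb')
    have : t ∈ S := hbtop ▸ hbS
    exact star t ht this.2
  -- uniform bound on Z
  have hsub_ne_zero : ν' - A ≠ 0 := by
    simpa [tsub_eq_zero_iff_le] using not_le.mpr h0
  have hZbound : ∀ t ∈ D, Z t ≤ A ^ 2 / (ν' - A) := by
    intro t ht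
    have hsup : (⨆ s ∈ Set.Icc (0:ℝ) t, X s) ≤ A :=
      iSup₂_le fun s hs => hXA s (hIccD t ht hs)
    have h2 : Z t ≤ A * Y t := (hineq2 t ht.1 ht.2).trans (mul_le_mul_left hsup _)
    have h1 : ν' * Y t ≤ A + A * Y t :=
      le_trans (le_add_self.trans (hineq1 t ht.1 ht.2)) (add_le_add le_rfl h2)
    have hsplit : (ν' - A) * Y t + A * Y t ≤ A + A * Y t := by
      calc (ν' - A) * Y t + A * Y t = ((ν' - A) + A) * Y t := (add_mul _ _ _).symm
        _ = ν' * Y t := by rw [tsub_add_cancel_of_le h0.le]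
        _ ≤ A + A * Y t := h1
    have hYA : (ν' - A) * Y t ≤ A :=
      (ENNReal.add_le_add_iff_right (ENNReal.mul_ne_top hAtop (hYfin t ht.1 ht.2))).mp hsplit
    have hYdiv : Y t ≤ A / (ν' - A) := by
      rw [ENNReal.le_div_iff_mul_le (Or.inl hsub_ne_zero)
        (Or.inl (ne_top_of_le_ne_top hν'top tsub_le_self)), mul_comm]
      exact hYA
    calc Z t ≤ A * Y t := h2
      _ ≤ A * (A / (ν' - A)) := mul_le_mul_right hYdiv _
      _ = A ^ 2 / (ν' - A) := by rw [sq, mul_div_assoc]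
  -- exhausting sequence
  obtain ⟨f, hfD, hfmono, hfcov⟩ : ∃ f : ℕ → ℝ, (∀ n, f n ∈ D) ∧ Monotone f ∧
      ∀ t ∈ D, ∃ n, t ≤ f n := by
    rcases eq_or_ne Tstar ⊤ with hT | hT
    · refine ⟨fun n => (n : ℝ), fun n => ⟨Nat.cast_nonneg n, by rw [hT]; exact ENNReal.ofReal_lt_top⟩,
        fun m n h => Nat.cast_le.mpr h, fun t ht => ?_⟩
      obtain ⟨n, hn⟩ := exists_nat_ge t
      exact ⟨n, hn⟩
    · set T : ℝ := Tstar.toReal with hT'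
      have hTpos : 0 < T := ENNReal.toReal_pos hTstar.ne' hT
      refine ⟨fun n => T - T / (n + 1), fun n => ?_, fun m n h => ?_, fun t ht => ?_⟩
      · constructor
        · have : T / (n + 1) ≤ T := by
            apply div_le_self hTpos.le
            have : (0:ℝ) ≤ n := Nat.cast_nonneg n
            linarith
          simpa using this
        · have h1 : T - T / (n + 1) < T := by
            have : 0 < T / (n + 1) := by positivity
            linarith
          have := ENNReal.ofReal_lt_ofReal_iff hTpos |>.mpr h1
          rwa [ENNReal.ofReal_toReal hT] at this
      · have hmn : (m:ℝ) ≤ n := Nat.cast_le.mpr h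
        have h1 : T / (n + 1) ≤ T / (m + 1) := by
          apply div_le_div_of_nonneg_left hTpos.le (by positivity) (by linarith)
        linarith
      · have htT : t < T := by
          have := ht.2
          rw [← ENNReal.ofReal_toReal hT] at this
          exact (ENNReal.ofReal_lt_ofReal_iff_of_nonneg ht.1).mp this
        obtain ⟨n, hn⟩ := exists_nat_ge (T / (T - t))
        refine ⟨n, ?_⟩
        have hTt : 0 < T - t := by linarith
        have h1 : T ≤ (T - t) * (n + 1) := by
          have h2 : T / (T - t) ≤ (n:ℝ) + 1 := by linarith
          calc T = (T / (T - t)) * (T - t) := by field_simp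
            _ ≤ ((n:ℝ) + 1) * (T - t) := by nlinarith
            _ = (T - t) * (n + 1) := by ring
        have hn1 : (0:ℝ) < (n:ℝ) + 1 := by positivity
        have : T / (n + 1) ≤ T - t := by
          rw [div_le_iff₀ hn1]
          linarith [h1]
        linarith
  -- conclude by monotone convergence
  set g : ℝ → ENNReal := fun t => (∫⁻ ξ, u t ξ) ^ 2 with hg
  have hgmeas : Measurable g := (hu.lintegral_prod_right').pow_const 2
  have hDmeas : MeasurableSet D := by
    apply MeasurableSet.inter
    · exact measurableSet_Ici
    · exact ENNReal.continuous_ofReal.measurable measurableSet_Iio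
  have hind : D.indicator g = fun t => ⨆ n, (Set.Icc (0:ℝ) (f n)).indicator g t := by
    funext t
    by_cases ht : t ∈ D
    · rw [Set.indicator_of_mem ht]
      obtain ⟨n, hn⟩ := hfcov t ht
      apply le_antisymm
      · have hmem : t ∈ Set.Icc (0:ℝ) (f n) := Set.mem_Icc.mpr ⟨ht.1, hn⟩
        exact le_trans (le_of_eq (Set.indicator_of_mem hmem g).symm)
          (le_iSup (fun n => (Set.Icc (0:ℝ) (f n)).indicator g t) n)
      · exact iSup_le fun n => Set.indicator_le_self _ _ t
    · rw [Set.indicator_of_notMem ht]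
      symm
      simp only [ENNReal.iSup_eq_zero]
      intro n
      rw [Set.indicator_of_notMem]
      intro hmem
      exact ht (hIccD (f n) (hfD n) hmem)
  calc ∫⁻ t in D, g t = ∫⁻ t, D.indicator g t := (lintegral_indicator hDmeas g).symm
    _ = ∫⁻ t, ⨆ n, (Set.Icc (0:ℝ) (f n)).indicator g t := by rw [hind]
    _ = ⨆ n, ∫⁻ t, (Set.Icc (0:ℝ) (f n)).indicator g t := by
        rw [lintegral_iSup (fun n => hgmeas.indicator measurableSet_Icc)]
        intro m n hmn t
        exact Set.indicator_le_indicator_of_subset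
          (Set.Icc_subset_Icc_right (hfmono hmn)) (fun x => zero_le) t
    _ ≤ A ^ 2 / (ν' - A) := by
        refine iSup_le fun n => ?_
        rw [lintegral_indicator measurableSet_Icc]
        have := hZbound (f n) (hfD n)
        rwa [hZ (f n)] at this
end
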